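/- arXiv:1705.00758 — 3 statements merged into one kernel-verified Lean document; each statement's English description precedes it below -/
import Mathlib

section
/- In a simply-laced root system, a positive root β satisfies ℓ(s_β) = ⟨2ρ, β^∨⟩ − 1 (i.e. every positive root is a quantum root). -/
/- A combinatorial framework for reduced crystallographic root systems with a
chosen system of simple roots, realized inside a real inner product space.
Weyl group elements are represented as plain functions `V → V` that are
compositions of simple reflections; `len` is the Coxeter length. -/

noncomputable section
open Classical
open scoped RealInnerProductSpace

namespace Pp

variable {V : Type*} [NormedAddCommGroup V] [InnerProductSpace ℝ V]

/-- The coroot pairing `⟨x, α^∨⟩ = 2⟨x,α⟩/⟨α,α⟩`. -/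
def cpr (x α : V) : ℝ := 2 * ⟪x, α⟫ / ⟪α, α⟫

/-- The reflection `s_α`, as a plain function. -/
def sref (α : V) : V → V := fun x => x - cpr x α • α

/-- `w` is a product of `n` reflections in simple roots taken from `Δ`. -/
def IsWord (Δ : Finset V) (w : V → V) (n : ℕ) : Prop :=
  ∃ l : List V, l.length = n ∧ (∀ α ∈ l, α ∈ Δ) ∧ w = (l.map sref).foldr (· ∘ ·) id

/-- The Weyl group generated by the simple reflections, as a set of functions. -/
def Weyl (Δ : Finset V) : Set (V → V) := { w | ∃ n, IsWord Δ w n }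

/-- Coxeter length with respect to the simple system `Δ`. -/
def len (Δ : Finset V) (w : V → V) : ℕ := sInf { n | IsWord Δ w n }

/-- The positive roots: roots which are nonnegative combinations of the
simple roots in `Δ`.  For a sub-system `Δ' ⊆ Δ`, `Pos Φ Δ'` is the set of
positive roots supported on `Δ'`. -/
def Pos (Φ Δ : Finset V) : Finset V :=
  Φ.filter fun β => ∃ c : V → ℝ, (∀ α ∈ Δ, 0 ≤ c α) ∧ β = ∑ α ∈ Δ, c α • α

/-- Half sum of positive roots. -/
def rho (Φ Δ : Finset V) : V := (2:ℝ)⁻¹ • ∑ β ∈ Pos Φ Δ, β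

/-- The axioms of a reduced crystallographic root system `Φ` with simple
system `Δ`. -/
structure IsRS (Φ Δ : Finset V) : Prop where
  zero_not_mem : (0:V) ∉ Φ
  neg_mem : ∀ α ∈ Φ, -α ∈ Φ
  reduced : ∀ α ∈ Φ, ∀ t : ℝ, t • α ∈ (Φ : Set V) → t = 1 ∨ t = -1
  cryst : ∀ α ∈ Φ, ∀ β ∈ Φ, ∃ k : ℤ, (k : ℝ) = cpr α β
  refl_mem : ∀ α ∈ Φ, ∀ β ∈ Φ, sref α β ∈ Φ
  simple_mem : ∀ α ∈ Δ, α ∈ Φ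
  simple_indep : LinearIndependent ℝ (fun α : Δ => (α : V))
  pos_or_neg : ∀ β ∈ Φ, β ∈ Pos Φ Δ ∨ -β ∈ Pos Φ Δ

/-- `β` is a quantum root: `ℓ(s_β) = ⟨2ρ, β^∨⟩ - 1`. -/
def IsQuantum (Φ Δ : Finset V) (β : V) : Prop :=
  (len Δ (sref β) : ℝ) = cpr ((2:ℝ) • rho Φ Δ) β - 1

/-- Minimal length coset representatives `W^P`: elements of `W` mapping the
positive roots of the parabolic (`Pos Φ ΔP`) to positive roots. -/
def MinRep (Φ Δ ΔP : Finset V) (w : V → V) : Prop :=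
  w ∈ Weyl Δ ∧ ∀ β ∈ Pos Φ ΔP, w β ∈ Pos Φ Δ

/-- `θ` is the highest root. -/
def IsHighest (Φ Δ : Finset V) (θ : V) : Prop :=
  θ ∈ Pos Φ Δ ∧ ∀ β ∈ Φ, ∃ c : V → ℝ, (∀ α ∈ Δ, 0 ≤ c α) ∧ θ - β = ∑ α ∈ Δ, c α • α

/-- All roots have the same length. -/
def SimplyLaced (Φ : Finset V) : Prop := ∀ α ∈ Φ, ∀ β ∈ Φ, ⟪α, α⟫ = ⟪β, β⟫

/-- The node `ι ∈ Δ` is minuscule: the coefficient of `α_ι^∨` in every coroot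
is at most `1`. -/
def Minuscule (Φ Δ : Finset V) (ι : V) : Prop :=
  ∀ β ∈ Φ, ∀ c : V → ℝ,
    (2 / ⟪β, β⟫) • β = ∑ α ∈ Δ, c α • ((2 / ⟪α, α⟫) • α) → c ι ≤ 1

/-- The node `ι ∈ Δ` is cominuscule: the coefficient of `α_ι` in every
positive root is at most `1`. -/
def Cominuscule (Φ Δ : Finset V) (ι : V) : Prop :=
  ∀ β ∈ Pos Φ Δ, ∀ c : V → ℝ,
    ((∀ α ∈ Δ, 0 ≤ c α) ∧ β = ∑ α ∈ Δ, c α • α) → c ι ≤ 1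

/-- `(Φ, Δ)` is the root system of type `B_n` in the standard coordinates
given by the orthonormal family `e`. -/
def TypeBData (Φ Δ : Finset V) (n : ℕ) (e : Fin n → V) : Prop :=
  Orthonormal ℝ e ∧
  (Φ : Set V) =
    ({v | ∃ i j : Fin n, i ≠ j ∧ (v = e i - e j ∨ v = e i + e j ∨ v = -(e i + e j))} ∪
     {v | ∃ i : Fin n, v = e i ∨ v = -(e i)}) ∧
  (Δ : Set V) =
    ({v | ∃ i : Fin n, ∃ h : (i : ℕ) + 1 < n, v = e i - e ⟨(i : ℕ) + 1, h⟩} ∪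
     {v | ∃ h : 0 < n, v = e ⟨n - 1, by omega⟩})

/-- `(Φ, Δ)` is the root system of type `C_n` in the standard coordinates
given by the orthonormal family `e`. -/
def TypeCData (Φ Δ : Finset V) (n : ℕ) (e : Fin n → V) : Prop :=
  Orthonormal ℝ e ∧
  (Φ : Set V) =
    ({v | ∃ i j : Fin n, i ≠ j ∧ (v = e i - e j ∨ v = e i + e j ∨ v = -(e i + e j))} ∪
     {v | ∃ i : Fin n, v = (2:ℝ) • e i ∨ v = -((2:ℝ) • e i)}) ∧
  (Δ : Set V) =
    ({v | ∃ i : Fin n, ∃ h : (i : ℕ) + 1 < n, v = e i - e ⟨(i : ℕ) + 1, h⟩} ∪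
     {v | ∃ h : 0 < n, v = (2:ℝ) • e ⟨n - 1, by omega⟩})

/-- `γ` is the distinguished (quantum) root attached to the minuscule node
`ι`: `γ = α_ι` in the simply-laced case, `γ = α_{n-1} + 2α_n = e_{n-1} + e_n`
in type `B_n` (with `ι = n`), and `γ = θ = 2e_1` in type `C_n` (with `ι = 1`). -/
def DistinguishedGamma (Φ Δ : Finset V) (ι γ : V) : Prop :=
  (SimplyLaced Φ ∧ γ = ι) ∨
  (∃ n : ℕ, ∃ _h : 2 ≤ n, ∃ e : Fin n → V, TypeBData Φ Δ n e ∧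
    ι = e ⟨n - 1, by omega⟩ ∧ γ = e ⟨n - 2, by omega⟩ + e ⟨n - 1, by omega⟩) ∨
  (∃ n : ℕ, ∃ _h : 2 ≤ n, ∃ e : Fin n → V, TypeCData Φ Δ n e ∧
    ι = e ⟨0, by omega⟩ - e ⟨1, by omega⟩ ∧ γ = (2:ℝ) • e ⟨0, by omega⟩)

namespace Aux

variable {V : Type*} [NormedAddCommGroup V] [InnerProductSpace ℝ V]

lemma inner_self_pos' {α : V} (h : α ≠ 0) : 0 < ⟪α, α⟫ :=
  lt_of_le_of_ne real_inner_self_nonneg (Ne.symm (inner_self_ne_zero.mpr h))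

lemma cpr_add_left (x y α : V) : cpr (x + y) α = cpr x α + cpr y α := by
  unfold cpr; rw [inner_add_left]; ring

lemma cpr_smul_left (c : ℝ) (x α : V) : cpr (c • x) α = c * cpr x α := by
  unfold cpr; rw [real_inner_smul_left]; ring

lemma cpr_sum {ι : Type*} (s : Finset ι) (f : ι → V) (α : V) :
    cpr (∑ i ∈ s, f i) α = ∑ i ∈ s, cpr (f i) α := by
  classical
  induction s using Finset.induction with
  | empty => simp [cpr]
  | @insert a s h ih => rw [Finset.sum_insert h, Finset.sum_insert h, cpr_add_left, ih]

lemma cpr_self {α : V} (h : α ≠ 0) : cpr α α = 2 := by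
  have : ⟪α, α⟫ ≠ 0 := ne_of_gt (inner_self_pos' h)
  unfold cpr; field_simp

lemma sref_apply (α x : V) : sref α x = x - cpr x α • α := rfl

lemma sref_add (α x y : V) : sref α (x + y) = sref α x + sref α y := by
  simp only [sref_apply, cpr_add_left, add_smul]; abel

lemma sref_smul (α : V) (c : ℝ) (x : V) : sref α (c • x) = c • sref α x := by
  simp only [sref_apply, cpr_smul_left, mul_smul, smul_sub]

lemma sref_neg (α x : V) : sref α (-x) = - sref α x := by
  have := sref_smul α (-1) x; simpa using this

lemma sref_self {α : V} (h : α ≠ 0) : sref α α = -α := by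
  rw [sref_apply, cpr_self h, two_smul]; abel

lemma cpr_sref (α : V) (x : V) : cpr (sref α x) α = - cpr x α := by
  rcases eq_or_ne α 0 with rfl | h
  · simp [cpr, sref]
  · have hq : ⟪α, α⟫ ≠ 0 := ne_of_gt (inner_self_pos' h)
    simp only [cpr, sref]
    rw [inner_sub_left, real_inner_smul_left]
    field_simp
    ring

lemma sref_sref {α : V} (h : α ≠ 0) (x : V) : sref α (sref α x) = x := by
  conv_lhs => rw [sref_apply, cpr_sref]
  rw [sref_apply]
  module

lemma sref_inner {α : V} (h : α ≠ 0) (x y : V) :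
    ⟪sref α x, sref α y⟫ = ⟪x, y⟫ := by
  have hq : ⟪α, α⟫ ≠ 0 := ne_of_gt (inner_self_pos' h)
  simp only [sref, cpr]
  simp only [inner_sub_left, inner_sub_right, real_inner_smul_left, real_inner_smul_right]
  rw [real_inner_comm α x, real_inner_comm α y]
  field_simp
  ring

/-- Word composite. -/
def F (l : List V) : V → V := (l.map sref).foldr (· ∘ ·) id

lemma F_nil : F ([] : List V) = id := rfl

lemma F_cons (σ : V) (l : List V) : F (σ :: l) = sref σ ∘ F l := rfl

lemma F_append (a b : List V) : F (a ++ b) = F a ∘ F b := by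
  induction a with
  | nil => rfl
  | cons σ t ih =>
    show sref σ ∘ F (t ++ b) = (sref σ ∘ F t) ∘ F b
    rw [ih]; rfl

lemma F_concat (l : List V) (α : V) : F (l ++ [α]) = F l ∘ sref α := by
  rw [F_append]; rfl

/-- Orthogonal-type maps with a two-sided inverse. -/
structure Nice (u uinv : V → V) : Prop where
  inner : ∀ x y, ⟪u x, u y⟫ = ⟪x, y⟫
  add : ∀ x y, u (x + y) = u x + u y
  smul : ∀ (c : ℝ) x, u (c • x) = c • u x
  left : ∀ x, uinv (u x) = x
  right : ∀ x, u (uinv x) = x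

lemma Nice.id' : Nice (id : V → V) id :=
  ⟨fun _ _ => rfl, fun _ _ => rfl, fun _ _ => rfl, fun _ => rfl, fun _ => rfl⟩

lemma Nice.sref' {α : V} (h : α ≠ 0) : Nice (sref α) (sref α) :=
  ⟨sref_inner h, sref_add α, sref_smul α, sref_sref h, sref_sref h⟩

lemma Nice.comp {u u' v v' : V → V} (hu : Nice u u') (hv : Nice v v') :
    Nice (u ∘ v) (v' ∘ u') := by
  refine ⟨fun x y => ?_, fun x y => ?_, fun c x => ?_, fun x => ?_, fun x => ?_⟩
  · simp [Function.comp, hu.inner, hv.inner]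
  · simp [Function.comp, hv.add, hu.add]
  · simp [Function.comp, hv.smul, hu.smul]
  · simp [Function.comp, hu.left, hv.left]
  · simp [Function.comp, hv.right, hu.right]

lemma Nice.neg {u u' : V → V} (hu : Nice u u') (x : V) : u (-x) = - u x := by
  have := hu.smul (-1) x; simpa using this

lemma Nice.sub {u u' : V → V} (hu : Nice u u') (x y : V) : u (x - y) = u x - u y := by
  rw [sub_eq_add_neg, hu.add, hu.neg, sub_eq_add_neg]

lemma nice_F {l : List V} (hl : ∀ σ ∈ l, σ ≠ 0) : Nice (F l) (F l.reverse) := by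
  induction l with
  | nil => exact Nice.id'
  | cons σ t ih =>
    have h1 : Nice (sref σ) (sref σ) := Nice.sref' (hl σ (by simp))
    have h2 : Nice (F t) (F t.reverse) := ih (fun x hx => hl x (by simp [hx]))
    have := h1.comp h2
    rw [show F t.reverse ∘ sref σ = F ((σ :: t).reverse) by
      rw [List.reverse_cons, F_concat]] at this
    exact this

/-- Conjugation: `s_{uγ} = u ∘ s_γ ∘ u'`. -/
lemma sref_conj {u u' : V → V} (hu : Nice u u') (γ : V) :
    sref (u γ) = u ∘ sref γ ∘ u' := by
  funext x
  have hx : ⟪x, u γ⟫ = ⟪u' x, γ⟫ := by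
    conv_lhs => rw [← hu.right x]
    exact hu.inner _ _
  have hγ : ⟪u γ, u γ⟫ = ⟪γ, γ⟫ := hu.inner _ _
  have hc : cpr x (u γ) = cpr (u' x) γ := by unfold cpr; rw [hx, hγ]
  show x - cpr x (u γ) • u γ = u (sref γ (u' x))
  rw [sref_apply, hu.sub, hu.smul, hu.right, hc]

variable {Φ Δ : Finset V}

lemma root_ne_zero (hRS : IsRS Φ Δ) {β : V} (hβ : β ∈ Φ) : β ≠ 0 :=
  fun h => hRS.zero_not_mem (h ▸ hβ)

lemma mem_Pos_iff {β : V} : β ∈ Pos Φ Δ ↔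
    β ∈ Φ ∧ ∃ c : V → ℝ, (∀ α ∈ Δ, 0 ≤ c α) ∧ β = ∑ α ∈ Δ, c α • α :=
  Finset.mem_filter

lemma Pos_subset {β : V} (h : β ∈ Pos Φ Δ) : β ∈ Φ := (Finset.mem_filter.mp h).1

lemma coeff_eq (hRS : IsRS Φ Δ) {c d : V → ℝ}
    (h : ∑ α ∈ Δ, c α • α = ∑ α ∈ Δ, d α • α) : ∀ α ∈ Δ, c α = d α := by
  have hind := hRS.simple_indep
  rw [linearIndependent_iff'] at hind
  intro α hα
  have h0 : ∑ x ∈ Δ.attach, (c x.1 - d x.1) • (x.1 : V) = 0 := by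
    rw [Finset.sum_attach Δ (fun y => (c y - d y) • y)]
    simp only [sub_smul, Finset.sum_sub_distrib, h, sub_self]
  have := hind Δ.attach (fun x => c x.1 - d x.1) h0 ⟨α, hα⟩ (Finset.mem_attach _ _)
  have h2 : c α - d α = 0 := this
  linarith

lemma mem_Pos_of_combo {β : V} (hβ : β ∈ Φ) {c : V → ℝ} (hc : ∀ α ∈ Δ, 0 ≤ c α)
    (h : β = ∑ α ∈ Δ, c α • α) : β ∈ Pos Φ Δ :=
  Finset.mem_filter.mpr ⟨hβ, c, hc, h⟩

lemma neg_not_mem_Pos (hRS : IsRS Φ Δ) {β : V} (h : β ∈ Pos Φ Δ) : -β ∉ Pos Φ Δ := by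
  intro h'
  obtain ⟨hβ, c, hc, hce⟩ := mem_Pos_iff.mp h
  obtain ⟨_, d, hd, hde⟩ := mem_Pos_iff.mp h'
  have hsum : ∑ α ∈ Δ, (c α + d α) • α = ∑ α ∈ Δ, (0:ℝ) • α := by
    simp only [add_smul, Finset.sum_add_distrib, ← hce, ← hde]
    simp
  have hz := coeff_eq hRS hsum
  have hβ0 : β = 0 := by
    rw [hce]; apply Finset.sum_eq_zero; intro α hα
    have h1 := hz α hα; have h2 := hc α hα; have h3 := hd α hα
    have : c α = 0 := by linarith
    simp [this]
  exact hRS.zero_not_mem (hβ0 ▸ hβ)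

lemma not_mem_Pos_iff (hRS : IsRS Φ Δ) {β : V} (hβ : β ∈ Φ) :
    β ∉ Pos Φ Δ ↔ -β ∈ Pos Φ Δ := by
  constructor
  · intro h
    rcases hRS.pos_or_neg β hβ with h' | h'
    · exact absurd h' h
    · exact h'
  · intro h h'; exact neg_not_mem_Pos hRS h' h

lemma simple_mem_Pos (hRS : IsRS Φ Δ) {α : V} (hα : α ∈ Δ) : α ∈ Pos Φ Δ := by
  refine mem_Pos_of_combo (hRS.simple_mem α hα)
    (c := fun x => if x = α then 1 else 0) ?_ ?_
  · intro x _; split <;> norm_num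
  · rw [show ∑ x ∈ Δ, (if x = α then (1:ℝ) else 0) • x
        = ∑ x ∈ Δ, (if x = α then x else 0) from by
      apply Finset.sum_congr rfl; intro x _; split <;> simp]
    rw [Finset.sum_ite_eq' Δ α (fun x => x)]
    simp [hα]

lemma add_mem_Pos (hRS : IsRS Φ Δ) {β γ : V} (hβ : β ∈ Pos Φ Δ) (hγ : γ ∈ Pos Φ Δ)
    (hm : β + γ ∈ Φ) : β + γ ∈ Pos Φ Δ := by
  obtain ⟨_, c, hc, hce⟩ := mem_Pos_iff.mp hβ
  obtain ⟨_, d, hd, hde⟩ := mem_Pos_iff.mp hγ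
  refine mem_Pos_of_combo hm (c := fun x => c x + d x)
    (fun α hα => add_nonneg (hc α hα) (hd α hα)) ?_
  rw [hce, hde, ← Finset.sum_add_distrib]
  simp [add_smul]

lemma simple_ne_zero (hRS : IsRS Φ Δ) {α : V} (hα : α ∈ Δ) : α ≠ 0 :=
  root_ne_zero hRS (hRS.simple_mem α hα)

/-- A simple reflection maps positive roots other than the simple root to positive roots. -/
lemma sref_simple_pos (hRS : IsRS Φ Δ) {α γ : V} (hα : α ∈ Δ) (hγ : γ ∈ Pos Φ Δ)
    (hne : γ ≠ α) : sref α γ ∈ Pos Φ Δ := by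
  have hαΦ : α ∈ Φ := hRS.simple_mem α hα
  have hγΦ : γ ∈ Φ := Pos_subset hγ
  have hmem : sref α γ ∈ Φ := hRS.refl_mem α hαΦ γ hγΦ
  by_contra h
  have hneg : -(sref α γ) ∈ Pos Φ Δ := (not_mem_Pos_iff hRS hmem).mp h
  obtain ⟨_, c, hc, hce⟩ := mem_Pos_iff.mp hγ
  obtain ⟨_, d, hd, hde⟩ := mem_Pos_iff.mp hneg
  set k : ℝ := cpr γ α with hk
  have key : ∑ x ∈ Δ, (c x + d x) • x = ∑ x ∈ Δ, (if x = α then k else 0) • x := by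
    have h1 : ∑ x ∈ Δ, (c x + d x) • x = γ + -(sref α γ) := by
      simp only [add_smul, Finset.sum_add_distrib, ← hce, ← hde]
    have h2 : γ + -(sref α γ) = k • α := by
      rw [sref_apply]; abel
    rw [h1, h2]
    rw [show ∑ x ∈ Δ, (if x = α then k else 0) • x
        = ∑ x ∈ Δ, (if x = α then k • x else 0) from by
      apply Finset.sum_congr rfl; intro x _; split <;> simp]
    rw [Finset.sum_ite_eq' Δ α (fun x => k • x)]
    simp [hα]
  have hco := coeff_eq hRS key
  have hγeq : γ = c α • α := by
    rw [hce]
    rw [Finset.sum_eq_single α]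
    · intro b hb hbne
      have := hco b hb
      rw [if_neg hbne] at this
      have h2 := hc b hb; have h3 := hd b hb
      have : c b = 0 := by linarith
      simp [this]
    · intro h'; exact absurd hα h'
  rcases hRS.reduced α hαΦ (c α) (by rw [← hγeq]; exact hγΦ) with h1 | h1
  · exact hne (by rw [hγeq, h1, one_smul])
  · have := hc α hα; rw [h1] at this; linarith

lemma sref_simple_ne (hRS : IsRS Φ Δ) {α γ : V} (hα : α ∈ Δ) (hγ : γ ∈ Pos Φ Δ) :
    sref α γ ≠ α := by
  intro h
  have hα0 : α ≠ 0 := simple_ne_zero hRS hα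
  have h2 : γ = -α := by
    have := congrArg (sref α) h
    rwa [sref_sref hα0, sref_self hα0] at this
  exact neg_not_mem_Pos hRS (simple_mem_Pos hRS hα) (h2 ▸ hγ)

lemma F_mem_Φ (hRS : IsRS Φ Δ) {l : List V} (hl : ∀ σ ∈ l, σ ∈ Δ) {β : V}
    (hβ : β ∈ Φ) : F l β ∈ Φ := by
  induction l with
  | nil => exact hβ
  | cons σ t ih =>
    have h1 : F t β ∈ Φ := ih (fun x hx => hl x (List.mem_cons_of_mem _ hx))
    show sref σ (F t β) ∈ Φ
    exact hRS.refl_mem σ (hRS.simple_mem σ (hl σ (List.mem_cons_self))) _ h1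

lemma nice_word (hRS : IsRS Φ Δ) {l : List V} (hl : ∀ σ ∈ l, σ ∈ Δ) :
    Nice (F l) (F l.reverse) :=
  nice_F (fun σ hσ => simple_ne_zero hRS (hl σ hσ))

/-- The inversion set. -/
def Nset (Φ Δ : Finset V) (w : V → V) : Finset V :=
  (Pos Φ Δ).filter fun γ => w γ ∉ Pos Φ Δ

lemma mem_Nset {w : V → V} {γ : V} :
    γ ∈ Nset Φ Δ w ↔ γ ∈ Pos Φ Δ ∧ w γ ∉ Pos Φ Δ := Finset.mem_filter

lemma card_erase_Nset (hRS : IsRS Φ Δ) {w : V → V} {α : V} (hα : α ∈ Δ) :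
    ((Nset Φ Δ (w ∘ sref α)).erase α).card = ((Nset Φ Δ w).erase α).card := by
  have hα0 : α ≠ 0 := simple_ne_zero hRS hα
  refine Finset.card_bij' (fun γ _ => sref α γ) (fun δ _ => sref α δ) ?_ ?_ ?_ ?_
  · intro γ hγ
    have h1 := Finset.mem_erase.mp hγ
    have hne := h1.1
    have hγP := (mem_Nset.mp h1.2).1
    have hw := (mem_Nset.mp h1.2).2
    refine Finset.mem_erase.mpr ⟨sref_simple_ne hRS hα hγP, mem_Nset.mpr ⟨?_, ?_⟩⟩
    · exact sref_simple_pos hRS hα hγP hne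
    · show w (sref α γ) ∉ Pos Φ Δ
      exact hw
  · intro δ hδ
    have h1 := Finset.mem_erase.mp hδ
    have hne := h1.1
    have hδP := (mem_Nset.mp h1.2).1
    have hw := (mem_Nset.mp h1.2).2
    refine Finset.mem_erase.mpr ⟨sref_simple_ne hRS hα hδP, mem_Nset.mpr ⟨?_, ?_⟩⟩
    · exact sref_simple_pos hRS hα hδP hne
    · show w (sref α (sref α δ)) ∉ Pos Φ Δ
      rw [sref_sref hα0]
      exact hw
  · intro γ _; exact sref_sref hα0 γ
  · intro δ _; exact sref_sref hα0 δ

lemma card_Nset_comp_pos (hRS : IsRS Φ Δ) {l : List V} (hl : ∀ σ ∈ l, σ ∈ Δ)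
    {α : V} (hα : α ∈ Δ) (h : F l α ∈ Pos Φ Δ) :
    (Nset Φ Δ (F l ∘ sref α)).card = (Nset Φ Δ (F l)).card + 1 := by
  have hα0 : α ≠ 0 := simple_ne_zero hRS hα
  have hnice := nice_word hRS hl
  have hαA : α ∉ Nset Φ Δ (F l) := by
    intro hmem; exact (mem_Nset.mp hmem).2 h
  have hαB : α ∈ Nset Φ Δ (F l ∘ sref α) := by
    refine mem_Nset.mpr ⟨simple_mem_Pos hRS hα, ?_⟩
    show F l (sref α α) ∉ Pos Φ Δ
    rw [sref_self hα0, hnice.neg]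
    exact neg_not_mem_Pos hRS h
  have h1 := card_erase_Nset hRS (w := F l) hα
  rw [Finset.erase_eq_of_notMem hαA] at h1
  have h2 : (Nset Φ Δ (F l ∘ sref α)).card =
      ((Nset Φ Δ (F l ∘ sref α)).erase α).card + 1 :=
    (Finset.card_erase_add_one hαB).symm
  omega

lemma card_Nset_comp_neg (hRS : IsRS Φ Δ) {l : List V} (hl : ∀ σ ∈ l, σ ∈ Δ)
    {α : V} (hα : α ∈ Δ) (h : F l α ∉ Pos Φ Δ) :
    (Nset Φ Δ (F l)).card = (Nset Φ Δ (F l ∘ sref α)).card + 1 := by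
  have hα0 : α ≠ 0 := simple_ne_zero hRS hα
  have hnice := nice_word hRS hl
  have hαΦ : F l α ∈ Φ := F_mem_Φ hRS hl (hRS.simple_mem α hα)
  have hαA : α ∈ Nset Φ Δ (F l) := mem_Nset.mpr ⟨simple_mem_Pos hRS hα, h⟩
  have hαB : α ∉ Nset Φ Δ (F l ∘ sref α) := by
    intro hmem
    have h2 := (mem_Nset.mp hmem).2
    have h3 : F l (sref α α) ∈ Pos Φ Δ := by
      rw [sref_self hα0, hnice.neg]
      exact (not_mem_Pos_iff hRS hαΦ).mp h
    exact h2 h3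
  have h1 := card_erase_Nset hRS (w := F l) hα
  rw [Finset.erase_eq_of_notMem hαB] at h1
  have h2 : (Nset Φ Δ (F l)).card = ((Nset Φ Δ (F l)).erase α).card + 1 :=
    (Finset.card_erase_add_one hαA).symm
  omega

/-- The exchange lemma. -/
lemma exchange (hRS : IsRS Φ Δ) :
    ∀ l : List V, (∀ σ ∈ l, σ ∈ Δ) → ∀ α ∈ Δ, F l α ∉ Pos Φ Δ →
    ∃ l' : List V, (∀ σ ∈ l', σ ∈ Δ) ∧ l'.length + 1 = l.length ∧ F l ∘ sref α = F l' := by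
  intro l
  induction l with
  | nil => intro _ α hα h; exact absurd (simple_mem_Pos hRS hα) h
  | cons σ t ih =>
    intro hl α hα h
    have hσ : σ ∈ Δ := hl σ (List.mem_cons_self)
    have ht : ∀ x ∈ t, x ∈ Δ := fun x hx => hl x (List.mem_cons_of_mem _ hx)
    have hαz : α ≠ 0 := simple_ne_zero hRS hα
    by_cases hc : F t α ∈ Pos Φ Δ
    · have heq : F t α = σ := by
        by_contra hne
        exact h (sref_simple_pos hRS hσ hc hne)
      have hnice := nice_word hRS ht
      have hconj : sref σ = F t ∘ sref α ∘ F t.reverse := by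
        rw [← heq]; exact sref_conj hnice α
      refine ⟨t, ht, rfl, ?_⟩
      funext x
      show sref σ (F t (sref α x)) = F t x
      rw [hconj]
      show F t (sref α (F t.reverse (F t (sref α x)))) = F t x
      rw [hnice.left, sref_sref hαz]
    · obtain ⟨t', ht', hlen, heq⟩ := ih ht α hα hc
      refine ⟨σ :: t', fun x hx => ?_, by simp [← hlen], ?_⟩
      · rcases List.mem_cons.mp hx with rfl | hx
        · exact hσ
        · exact ht' x hx
      · funext x
        show sref σ (F t (sref α x)) = sref σ (F t' x)
        rw [show F t (sref α x) = F t' x from congrFun heq x]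

lemma isWord_F {l : List V} (hl : ∀ σ ∈ l, σ ∈ Δ) : IsWord Δ (F l) l.length :=
  ⟨l, rfl, hl, rfl⟩

lemma len_le {w : V → V} {n : ℕ} (h : IsWord Δ w n) : len Δ w ≤ n := Nat.sInf_le h

lemma exists_min_word {w : V → V} (hw : w ∈ Weyl Δ) :
    ∃ l : List V, l.length = len Δ w ∧ (∀ σ ∈ l, σ ∈ Δ) ∧ w = F l := by
  obtain ⟨n, hn⟩ := hw
  exact Nat.sInf_mem (⟨n, hn⟩ : {n | IsWord Δ w n}.Nonempty)

/-- Key theorem: the length equals the number of inversions. -/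
lemma card_Nset_eq_len (hRS : IsRS Φ Δ) :
    ∀ n : ℕ, ∀ w : V → V, w ∈ Weyl Δ → len Δ w = n → (Nset Φ Δ w).card = n := by
  intro n
  induction n using Nat.strong_induction_on with
  | _ n IH =>
    intro w hw hlen
    obtain ⟨l, hlL, hlΔ, rfl⟩ := exists_min_word hw
    rw [hlen] at hlL
    rcases Nat.eq_zero_or_pos n with hn0 | hnpos
    · subst hn0
      have : l = [] := List.eq_nil_of_length_eq_zero hlL
      subst this
      rw [show Nset Φ Δ (F ([] : List V)) = ∅ from ?_]
      · simp
      · apply Finset.filter_false_of_mem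
        intro γ hγ
        simp only [F_nil, id_eq, not_not]
        exact hγ
    · by_cases hca : ∃ α₀ ∈ Δ, F l α₀ ∉ Pos Φ Δ
      · obtain ⟨α₀, hα₀, hneg⟩ := hca
        obtain ⟨l₂, hl₂Δ, hl₂len, hl₂eq⟩ := exchange hRS l hlΔ α₀ hα₀ hneg
        have hwWeyl : F l ∘ sref α₀ ∈ Weyl Δ := by
          refine ⟨l₂.length, l₂, rfl, hl₂Δ, ?_⟩
          exact hl₂eq
        set m' := len Δ (F l ∘ sref α₀) with hm'
        have hm'le : m' ≤ l₂.length := by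
          rw [hm', hl₂eq]; exact len_le (isWord_F hl₂Δ)
        obtain ⟨l₃, hl₃L, hl₃Δ, hl₃eq⟩ := exists_min_word hwWeyl
        have hFl : F l = F (l₃ ++ [α₀]) := by
          rw [F_concat, ← hl₃eq]
          funext x
          show F l x = F l (sref α₀ (sref α₀ x))
          rw [sref_sref (simple_ne_zero hRS hα₀)]
        have hlenle : n ≤ m' + 1 := by
          rw [← hlen]
          calc len Δ (F l) ≤ (l₃ ++ [α₀]).length := by
                rw [hFl]; exact len_le (isWord_F (by
                  intro x hx
                  rcases List.mem_append.mp hx with hx | hx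
                  · exact hl₃Δ x hx
                  · rw [List.mem_singleton.mp hx]; exact hα₀))
            _ = m' + 1 := by rw [List.length_append, hl₃L, List.length_singleton]
        have hm'eq : m' = n - 1 := by omega
        have hcard := IH m' (by omega) (F l ∘ sref α₀) hwWeyl hm'.symm
        have hfinal := card_Nset_comp_neg hRS hlΔ hα₀ hneg
        omega
      · push_neg at hca
        exfalso
        obtain ⟨l', α, hlapp⟩ := (List.eq_nil_or_concat l).resolve_left
          (by intro h; rw [h] at hlL; simp at hlL; omega)
        rw [List.concat_eq_append] at hlapp
        have hl'Δ : ∀ σ ∈ l', σ ∈ Δ := fun σ hσ => hlΔ σ (by rw [hlapp]; simp [hσ])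
        have hαΔ : α ∈ Δ := hlΔ α (by rw [hlapp]; simp)
        have hα0 : α ≠ 0 := simple_ne_zero hRS hαΔ
        have hdec : F l = F l' ∘ sref α := by rw [hlapp, F_concat]
        have hl' : F l' = F l ∘ sref α := by
          rw [hdec]; funext x
          show F l' x = F l' (sref α (sref α x))
          rw [sref_sref hα0]
        have hnice := nice_word hRS hlΔ
        have hneg' : F l' α ∉ Pos Φ Δ := by
          rw [hl']
          show F l (sref α α) ∉ Pos Φ Δ
          rw [sref_self hα0, hnice.neg]
          exact neg_not_mem_Pos hRS (hca α hαΔ)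
        obtain ⟨l₃, hl₃Δ, hl₃len, hl₃eq⟩ := exchange hRS l' hl'Δ α hαΔ hneg'
        have hF : F l = F l₃ := by rw [← hl₃eq]; exact hdec
        have : len Δ (F l) ≤ l₃.length := by rw [hF]; exact len_le (isWord_F hl₃Δ)
        have hlen' : l'.length + 1 = l.length := by rw [hlapp]; simp
        omega

/-- A chosen height function on positive roots. -/
def ht (Φ Δ : Finset V) (β : V) : ℝ :=
  if h : β ∈ Pos Φ Δ then ∑ α ∈ Δ, Classical.choose (Finset.mem_filter.mp h).2 α else 0

lemma ht_eq (hRS : IsRS Φ Δ) {β : V} (hβ : β ∈ Pos Φ Δ) {c : V → ℝ}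
    (hce : β = ∑ α ∈ Δ, c α • α) : ht Φ Δ β = ∑ α ∈ Δ, c α := by
  rw [ht, dif_pos hβ]
  have hspec := Classical.choose_spec (Finset.mem_filter.mp hβ).2
  exact Finset.sum_congr rfl fun α hα => coeff_eq hRS (hspec.2.symm.trans hce) α hα

lemma orbit (hRS : IsRS Φ Δ) : ∀ N : ℕ, ∀ β ∈ Pos Φ Δ,
    ((Pos Φ Δ).filter fun γ => ht Φ Δ γ < ht Φ Δ β).card = N →
    ∃ l : List V, (∀ σ ∈ l, σ ∈ Δ) ∧ ∃ α ∈ Δ, F l α = β := by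
  intro N
  induction N using Nat.strong_induction_on with
  | _ N IH =>
    intro β hβ hcard
    by_cases hsimple : β ∈ Δ
    · exact ⟨[], by simp, β, hsimple, rfl⟩
    obtain ⟨hβΦ, c, hc, hce⟩ := mem_Pos_iff.mp hβ
    have hββ : 0 < ⟪β, β⟫ := inner_self_pos' (root_ne_zero hRS hβΦ)
    have hex : ∃ α ∈ Δ, 0 < ⟪β, α⟫ := by
      by_contra hno
      push_neg at hno
      have hsum : ⟪β, β⟫ = ∑ α ∈ Δ, c α * ⟪β, α⟫ := by
        nth_rewrite 2 [hce]
        rw [inner_sum]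
        exact Finset.sum_congr rfl fun α _ => real_inner_smul_right _ _ _
      have : ⟪β, β⟫ ≤ 0 := by
        rw [hsum]
        apply Finset.sum_nonpos
        intro α hα
        exact mul_nonpos_of_nonneg_of_nonpos (hc α hα) (hno α hα)
      linarith
    obtain ⟨α, hαΔ, hpos⟩ := hex
    have hα0 : α ≠ 0 := simple_ne_zero hRS hαΔ
    have hαα : 0 < ⟪α, α⟫ := inner_self_pos' hα0
    have hne : β ≠ α := fun h => hsimple (h ▸ hαΔ)
    have hβ' : sref α β ∈ Pos Φ Δ := sref_simple_pos hRS hαΔ hβ hne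
    set k : ℝ := cpr β α with hk
    have hkpos : 0 < k := by
      rw [hk]; unfold cpr; positivity
    -- height decreases
    have hhtβ : ht Φ Δ β = ∑ x ∈ Δ, c x := ht_eq hRS hβ hce
    have hite : ∑ x ∈ Δ, (if x = α then k else 0) • x = k • α := by
      rw [show ∑ x ∈ Δ, (if x = α then k else (0:ℝ)) • x
          = ∑ x ∈ Δ, (if x = α then k • x else 0) from
        Finset.sum_congr rfl (fun x _ => by split <;> simp)]
      rw [Finset.sum_ite_eq' Δ α (fun x => k • x)]
      simp [hαΔ]
    have hcomb : sref α β = ∑ x ∈ Δ, (c x - if x = α then k else 0) • x := by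
      simp only [sub_smul, Finset.sum_sub_distrib, hite, ← hce]
      rw [sref_apply, ← hk]
    have hht' : ht Φ Δ (sref α β) = (∑ x ∈ Δ, c x) - k := by
      rw [ht_eq hRS hβ' hcomb, Finset.sum_sub_distrib]
      congr 1
      rw [Finset.sum_ite_eq' Δ α (fun _ => k)]
      simp [hαΔ]
    have hlt : ht Φ Δ (sref α β) < ht Φ Δ β := by rw [hht', hhtβ]; linarith
    set S := (Pos Φ Δ).filter (fun γ => ht Φ Δ γ < ht Φ Δ β) with hS
    set S' := (Pos Φ Δ).filter (fun γ => ht Φ Δ γ < ht Φ Δ (sref α β)) with hS'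
    have hsub : S' ⊆ S := by
      intro γ hγ
      rw [hS', Finset.mem_filter] at hγ
      exact Finset.mem_filter.mpr ⟨hγ.1, lt_trans hγ.2 hlt⟩
    have hmemS : sref α β ∈ S := Finset.mem_filter.mpr ⟨hβ', hlt⟩
    have hnotS' : sref α β ∉ S' := fun h => absurd (Finset.mem_filter.mp h).2 (lt_irrefl _)
    have hcardlt : S'.card < N := by
      rw [← hcard]
      exact Finset.card_lt_card
        ((Finset.ssubset_iff_of_subset hsub).mpr ⟨sref α β, hmemS, hnotS'⟩)
    obtain ⟨l, hl, α'', hα'', hF⟩ := IH S'.card hcardlt (sref α β) hβ' (by rw [hS'])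
    refine ⟨α :: l, ?_, α'', hα'', ?_⟩
    · intro x hx
      rcases List.mem_cons.mp hx with rfl | hx
      · exact hαΔ
      · exact hl x hx
    · show sref α (F l α'') = β
      rw [hF]
      exact sref_sref hα0 β

lemma sref_pos_mem_Weyl (hRS : IsRS Φ Δ) {β : V} (hβ : β ∈ Pos Φ Δ) :
    sref β ∈ Weyl Δ := by
  obtain ⟨l, hl, α, hα, hFlα⟩ := orbit hRS _ β hβ rfl
  have hnice := nice_word hRS hl
  have hform : sref β = F (l ++ α :: l.reverse) := by
    rw [F_append, ← hFlα, sref_conj hnice α]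
    rfl
  refine ⟨(l ++ α :: l.reverse).length, l ++ α :: l.reverse, rfl, ?_, hform⟩
  intro σ hσ
  rcases List.mem_append.mp hσ with hσ | hσ
  · exact hl σ hσ
  · rcases List.mem_cons.mp hσ with rfl | hσ
    · exact hα
    · exact hl σ (List.mem_reverse.mp hσ)

lemma cpr_eq_one (hRS : IsRS Φ Δ) (hSL : SimplyLaced Φ) {β γ : V}
    (hβ : β ∈ Pos Φ Δ) (hγ : γ ∈ Pos Φ Δ) (hne : γ ≠ β)
    (hγB : sref β γ ∉ Pos Φ Δ) : cpr γ β = 1 := by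
  have hβΦ := Pos_subset hβ
  have hγΦ := Pos_subset hγ
  have hββ : 0 < ⟪β, β⟫ := inner_self_pos' (root_ne_zero hRS hβΦ)
  have hq : ⟪γ, γ⟫ = ⟪β, β⟫ := hSL γ hγΦ β hβΦ
  obtain ⟨k, hk⟩ := hRS.cryst γ hγΦ β hβΦ
  have hCS : |⟪γ, β⟫| ≤ ⟪β, β⟫ := by
    have h1 := abs_real_inner_le_norm γ β
    have h2 : ‖γ‖ = ‖β‖ := by
      have := real_inner_self_eq_norm_mul_norm γ
      have h3 := real_inner_self_eq_norm_mul_norm β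
      nlinarith [norm_nonneg γ, norm_nonneg β]
    rw [h2, ← real_inner_self_eq_norm_mul_norm] at h1
    exact h1
  have hkabs : |(k:ℝ)| ≤ 2 := by
    rw [hk]
    unfold cpr
    rw [abs_div, abs_of_pos hββ, abs_mul, abs_two, div_le_iff₀ hββ]
    nlinarith [abs_nonneg ⟪γ,β⟫]
  have hkrange : k = -2 ∨ k = -1 ∨ k = 0 ∨ k = 1 ∨ k = 2 := by
    have h2 : |k| ≤ 2 := by exact_mod_cast hkabs
    have h3 := abs_le.mp h2
    omega
  have hip : ⟪γ, β⟫ = (k:ℝ) * ⟪β, β⟫ / 2 := by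
    rw [hk]; unfold cpr; field_simp
  rcases hkrange with h | h | h | h | h
  · exfalso
    have hz : ⟪γ + β, γ + β⟫ = 0 := by
      rw [real_inner_add_add_self, hq, hip, h]
      push_cast
      ring
    have hγβ : γ = -β := eq_neg_of_add_eq_zero_left (inner_self_eq_zero.mp hz)
    exact neg_not_mem_Pos hRS hβ (hγβ ▸ hγ)
  · exfalso
    have hrefl : sref β γ = γ + β := by
      rw [sref_apply, ← hk, h]
      push_cast
      module
    have : γ + β ∈ Φ := by rw [← hrefl]; exact hRS.refl_mem β hβΦ γ hγΦ
    exact hγB (by rw [hrefl]; exact add_mem_Pos hRS hγ hβ this)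
  · exfalso
    have hrefl : sref β γ = γ := by
      rw [sref_apply, ← hk, h]
      push_cast
      module
    exact hγB (by rw [hrefl]; exact hγ)
  · rw [← hk, h]; norm_num
  · exfalso
    have hz : ⟪γ - β, γ - β⟫ = 0 := by
      rw [real_inner_sub_sub_self, hq, hip, h]
      push_cast
      ring
    exact hne (sub_eq_zero.mp (inner_self_eq_zero.mp hz))

lemma sum_cpr_fix (hRS : IsRS Φ Δ) {β : V} (hβ : β ∈ Pos Φ Δ) :
    ∑ γ ∈ (Pos Φ Δ).filter (fun γ => sref β γ ∈ Pos Φ Δ), cpr γ β = 0 := by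
  have hβ0 : β ≠ 0 := root_ne_zero hRS (Pos_subset hβ)
  apply Finset.sum_involution (g := fun γ _ => sref β γ)
  · intro γ hγ
    rw [cpr_sref]
    ring
  · intro γ hγ hne hfix
    apply hne
    have : cpr γ β • β = 0 := by
      have := congrArg (fun x => γ - x) hfix.symm
      simpa [sref_apply] using this.symm
    rcases smul_eq_zero.mp this with h | h
    · rw [h]
    · exact absurd h hβ0
  · intro γ hγ
    have h1 := Finset.mem_filter.mp hγ
    refine Finset.mem_filter.mpr ⟨h1.2, ?_⟩
    rw [sref_sref hβ0]
    exact h1.1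
  · intro γ hγ
    exact sref_sref hβ0 γ

lemma sum_cpr_inv (hRS : IsRS Φ Δ) (hSL : SimplyLaced Φ) {β : V} (hβ : β ∈ Pos Φ Δ) :
    ∑ γ ∈ Nset Φ Δ (sref β), cpr γ β = (Nset Φ Δ (sref β)).card + 1 := by
  have hβ0 : β ≠ 0 := root_ne_zero hRS (Pos_subset hβ)
  have hβB : β ∈ Nset Φ Δ (sref β) := by
    refine mem_Nset.mpr ⟨hβ, ?_⟩
    rw [sref_self hβ0]
    exact neg_not_mem_Pos hRS hβ
  rw [← Finset.sum_erase_add _ _ hβB]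
  have h1 : ∑ γ ∈ (Nset Φ Δ (sref β)).erase β, cpr γ β
      = ((Nset Φ Δ (sref β)).erase β).card := by
    rw [Finset.sum_congr rfl (fun γ hγ => ?_)]
    · rw [Finset.sum_const, nsmul_eq_mul, mul_one]
    · have h2 := Finset.mem_erase.mp hγ
      have h3 := mem_Nset.mp h2.2
      exact cpr_eq_one hRS hSL hβ h3.1 h2.1 h3.2
  rw [h1, cpr_self hβ0, Finset.card_erase_of_mem hβB]
  have : 0 < (Nset Φ Δ (sref β)).card := Finset.card_pos.mpr ⟨β, hβB⟩
  push_cast [Nat.cast_sub (by omega : 1 ≤ (Nset Φ Δ (sref β)).card)]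
  ring

end Aux

end Pp

open Pp in
/-- In a simply-laced root system every positive root `β` is a quantum root:
`ℓ(s_β) = ⟨2ρ, β^∨⟩ - 1`. -/
theorem stmt1 {V : Type*} [NormedAddCommGroup V] [InnerProductSpace ℝ V]
    (Φ Δ : Finset V) (hRS : IsRS Φ Δ) (hSL : SimplyLaced Φ)
    (β : V) (hβ : β ∈ Pos Φ Δ) :
    IsQuantum Φ Δ β := by
  classical
  have hβΦ : β ∈ Φ := Aux.Pos_subset hβ
  have hβ0 : β ≠ 0 := Aux.root_ne_zero hRS hβΦ
  have hW : sref β ∈ Weyl Δ := Aux.sref_pos_mem_Weyl hRS hβ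
  have hlen : (Aux.Nset Φ Δ (sref β)).card = len Δ (sref β) :=
    Aux.card_Nset_eq_len hRS (len Δ (sref β)) (sref β) hW rfl
  unfold IsQuantum
  have h2rho : (2:ℝ) • rho Φ Δ = ∑ γ ∈ Pos Φ Δ, γ := by
    rw [rho, smul_smul]
    norm_num
  rw [h2rho, Aux.cpr_sum]
  rw [← Finset.sum_filter_add_sum_filter_not (Pos Φ Δ)
    (fun γ => sref β γ ∈ Pos Φ Δ) (fun γ => cpr γ β)]
  have hBset : (Pos Φ Δ).filter (fun γ => ¬ (sref β γ ∈ Pos Φ Δ)) = Aux.Nset Φ Δ (sref β) := by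
    apply Finset.ext
    intro γ
    simp [Aux.mem_Nset, Finset.mem_filter]
  rw [Aux.sum_cpr_fix hRS hβ, hBset, Aux.sum_cpr_inv hRS hSL hβ, ← hlen]
  push_cast
  ring
end
end

section
/- In the root system of type C_n (n ≥ 2), the set of quantum roots (positive roots β with ℓ(s_β) = ⟨2ρ, β^∨⟩ − 1) equals the union of the long positive roots together with the short roots of the form α_i + α_{i+1} + ⋯ + α_j for 1 ≤ i ≤ j ≤ n−1. -/
/- A combinatorial framework for reduced crystallographic root systems with a
chosen system of simple roots, realized inside a real inner product space.
Weyl group elements are represented as plain functions `V → V` that are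
compositions of simple reflections; `len` is the Coxeter length. -/

noncomputable section
open Classical
open scoped RealInnerProductSpace

namespace Pp

variable {V : Type*} [NormedAddCommGroup V] [InnerProductSpace ℝ V]

/-! ### Auxiliary development -/

section QAux
set_option linter.unusedSectionVars false
variable {V : Type*} [NormedAddCommGroup V] [InnerProductSpace ℝ V]

lemma cpr_zero_right (x : V) : cpr x (0:V) = 0 := by
  simp [cpr]

lemma sref_zero_right (x : V) : sref (0:V) x = x := by
  simp [sref, cpr_zero_right]

lemma cpr_add_left (x y α : V) : cpr (x + y) α = cpr x α + cpr y α := by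
  simp [cpr, inner_add_left, mul_add, add_div]

lemma cpr_neg_left (x α : V) : cpr (-x) α = - cpr x α := by
  simp [cpr, inner_neg_left, neg_div]

lemma cpr_sub_left (x y α : V) : cpr (x - y) α = cpr x α - cpr y α := by
  simp [cpr, inner_sub_left, mul_sub, sub_div]

lemma cpr_smul_left (c : ℝ) (x α : V) : cpr (c • x) α = c * cpr x α := by
  simp only [cpr, real_inner_smul_left]
  ring

lemma cpr_self (α : V) (hα : α ≠ 0) : cpr α α = 2 := by
  have : ⟪α, α⟫ ≠ 0 := by
    simpa [inner_self_eq_zero] using hα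
  rw [cpr, mul_div_assoc, div_self this, mul_one]

lemma sref_add (α x y : V) : sref α (x + y) = sref α x + sref α y := by
  simp only [sref, cpr_add_left, add_smul]; abel

lemma sref_sub (α x y : V) : sref α (x - y) = sref α x - sref α y := by
  simp only [sref, cpr_sub_left, sub_smul]; abel

lemma sref_neg (α x : V) : sref α (-x) = - sref α x := by
  simp only [sref, cpr_neg_left, neg_smul]; abel

lemma sref_smul (α : V) (c : ℝ) (x : V) : sref α (c • x) = c • sref α x := by
  simp only [sref, cpr_smul_left, smul_sub, smul_smul]

lemma sref_sref (α x : V) : sref α (sref α x) = x := by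
  by_cases hα : α = 0
  · simp [hα, sref_zero_right]
  · simp only [sref, cpr_sub_left, cpr_smul_left, cpr_self α hα]
    module

lemma sref_involutive (α : V) : Function.Involutive (sref α) := fun x => sref_sref α x

lemma sref_inner (α x y : V) : ⟪sref α x, sref α y⟫ = ⟪x, y⟫ := by
  by_cases hα : α = 0
  · simp [hα, sref_zero_right]
  · have hq : ⟪α, α⟫ ≠ 0 := by simpa [inner_self_eq_zero] using hα
    simp only [sref, cpr, inner_sub_left, inner_sub_right, inner_smul_left, inner_smul_right,
      real_inner_comm x α, conj_trivial]
    rw [real_inner_comm α y]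
    field_simp
    ring

lemma sref_conj (α γ : V) : sref (sref α γ) = sref α ∘ sref γ ∘ sref α := by
  funext x
  have h1 : cpr (sref α x) γ = cpr x (sref α γ) := by
    unfold cpr
    rw [show ⟪sref α x, γ⟫ = ⟪x, sref α γ⟫ by
        conv_lhs => rw [← sref_sref α γ]
        rw [sref_inner],
      show ⟪γ, γ⟫ = ⟪sref α γ, sref α γ⟫ by rw [sref_inner]]
  simp only [Function.comp_apply]
  conv_rhs => rw [show sref γ (sref α x) = sref α x - cpr (sref α x) γ • γ from rfl]
  rw [sref_sub, sref_smul, sref_sref, h1]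
  rfl

/-! ### Words -/

lemma foldr_comp_eq (L : List (V → V)) (g : V → V) :
    L.foldr (· ∘ ·) g = L.foldr (· ∘ ·) id ∘ g := by
  induction L with
  | nil => rfl
  | cons f L ih => simp [List.foldr_cons, ih, Function.comp_assoc]

lemma isWord_id (Δ : Finset V) : IsWord Δ id 0 :=
  ⟨[], rfl, by simp, rfl⟩

lemma isWord_sref {Δ : Finset V} {α : V} (hα : α ∈ Δ) : IsWord Δ (sref α) 1 :=
  ⟨[α], rfl, by simpa using hα, by simp [List.foldr]⟩

lemma IsWord.comp {Δ : Finset V} {w w' : V → V} {m m' : ℕ}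
    (h : IsWord Δ w m) (h' : IsWord Δ w' m') : IsWord Δ (w ∘ w') (m + m') := by
  obtain ⟨l, hl, hmem, rfl⟩ := h
  obtain ⟨l', hl', hmem', rfl⟩ := h'
  refine ⟨l ++ l', by simp [hl, hl'], ?_, ?_⟩
  · intro α hmem''
    rcases List.mem_append.mp hmem'' with h | h
    · exact hmem α h
    · exact hmem' α h
  · rw [List.map_append, List.foldr_append]
    exact (foldr_comp_eq _ _).symm

lemma IsWord.conj {Δ : Finset V} {γ α : V} {m : ℕ}
    (h : IsWord Δ (sref γ) m) (hα : α ∈ Δ) : IsWord Δ (sref (sref α γ)) (m + 2) := by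
  rw [sref_conj]
  have h2 := (isWord_sref hα).comp (h.comp (isWord_sref hα))
  rw [show 1 + (m + 1) = m + 2 by omega] at h2
  exact h2

lemma len_le {Δ : Finset V} {w : V → V} {m : ℕ} (h : IsWord Δ w m) : len Δ w ≤ m :=
  Nat.sInf_le h

lemma le_len {Δ : Finset V} {w : V → V} {m₀ N : ℕ} (h₀ : IsWord Δ w m₀)
    (h : ∀ m, IsWord Δ w m → N ≤ m) : N ≤ len Δ w :=
  le_csInf ⟨m₀, h₀⟩ h

lemma IsWord.injective {Δ : Finset V} {w : V → V} {m : ℕ} (h : IsWord Δ w m) :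
    Function.Injective w := by
  obtain ⟨l, -, -, rfl⟩ := h
  induction l with
  | nil => exact fun a b h => h
  | cons f L ih =>
    simp only [List.map_cons, List.foldr_cons]
    exact ((sref_involutive f).injective).comp ih

lemma IsWord.maps_root {Φ Δ : Finset V} (hRS : IsRS Φ Δ) {w : V → V} {m : ℕ}
    (h : IsWord Δ w m) : ∀ x ∈ Φ, w x ∈ Φ := by
  obtain ⟨l, -, hmem, rfl⟩ := h
  induction l with
  | nil => exact fun x hx => hx
  | cons f L ih =>
    intro x hx
    simp only [List.map_cons, List.foldr_cons, Function.comp_apply]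
    exact hRS.refl_mem f (hRS.simple_mem f (hmem f (by simp)))
      _ (ih (fun α hα => hmem α (by simp [hα])) x hx)

end QAux

section CAux
set_option linter.unusedSectionVars false
open Finset
variable {V : Type*} [NormedAddCommGroup V] [InnerProductSpace ℝ V]
variable (n : ℕ) (e : Fin n → V)

/-- The simple roots of `C_n`. -/
def sroot (k : Fin n) : V :=
  if h : (k : ℕ) + 1 < n then e k - e ⟨(k : ℕ) + 1, h⟩ else (2:ℝ) • e k

def P1 : Finset V :=
  ((univ : Finset (Fin n × Fin n)).filter fun p => p.1 < p.2).image fun p => e p.1 - e p.2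

def P2 : Finset V :=
  ((univ : Finset (Fin n × Fin n)).filter fun p => p.1 < p.2).image fun p => e p.1 + e p.2

def P3 : Finset V := (univ : Finset (Fin n)).image fun i => (2:ℝ) • e i

def PosC : Finset V := P1 n e ∪ P2 n e ∪ P3 n e

lemma mem_P1 {v : V} : v ∈ P1 n e ↔ ∃ i j : Fin n, i < j ∧ v = e i - e j := by
  simp only [P1, mem_image, mem_filter, mem_univ, true_and, Prod.exists]
  constructor
  · rintro ⟨i, j, hij, rfl⟩; exact ⟨i, j, hij, rfl⟩
  · rintro ⟨i, j, hij, rfl⟩; exact ⟨i, j, hij, rfl⟩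

lemma mem_P2 {v : V} : v ∈ P2 n e ↔ ∃ i j : Fin n, i < j ∧ v = e i + e j := by
  simp only [P2, mem_image, mem_filter, mem_univ, true_and, Prod.exists]
  constructor
  · rintro ⟨i, j, hij, rfl⟩; exact ⟨i, j, hij, rfl⟩
  · rintro ⟨i, j, hij, rfl⟩; exact ⟨i, j, hij, rfl⟩

lemma mem_P3 {v : V} : v ∈ P3 n e ↔ ∃ i : Fin n, v = (2:ℝ) • e i := by
  simp only [P3, mem_image, mem_univ, true_and]
  constructor
  · rintro ⟨i, rfl⟩; exact ⟨i, rfl⟩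
  · rintro ⟨i, rfl⟩; exact ⟨i, rfl⟩

lemma mem_PosC {v : V} : v ∈ PosC n e ↔
    (∃ i j : Fin n, i < j ∧ v = e i - e j) ∨ (∃ i j : Fin n, i < j ∧ v = e i + e j) ∨
    (∃ i : Fin n, v = (2:ℝ) • e i) := by
  simp only [PosC, mem_union, mem_P1, mem_P2, mem_P3, or_assoc]

variable {n e} (he : Orthonormal ℝ e)
include he

lemma ee (i j : Fin n) : ⟪e i, e j⟫ = if i = j then (1:ℝ) else 0 :=
  orthonormal_iff_ite.mp he i j

lemma inner_sub_self_swap {i j : Fin n} (hij : i ≠ j) : ⟪e i - e j, e i - e j⟫ = (2:ℝ) := by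
  simp [inner_sub_left, inner_sub_right, ee he, hij, hij.symm, -inner_self_eq_norm_sq_to_K]; norm_num

lemma inner_add_self_swap {i j : Fin n} (hij : i ≠ j) : ⟪e i + e j, e i + e j⟫ = (2:ℝ) := by
  simp [inner_add_left, inner_add_right, ee he, hij, hij.symm, -inner_self_eq_norm_sq_to_K]; norm_num

lemma inner_long_self (i : Fin n) : ⟪(2:ℝ) • e i, (2:ℝ) • e i⟫ = (4:ℝ) := by
  simp [real_inner_smul_left, real_inner_smul_right, ee he, -inner_self_eq_norm_sq_to_K]; norm_num

lemma cpr_swap {k l : Fin n} (hkl : k ≠ l) (a : Fin n) :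
    cpr (e a) (e k - e l) = (if a = k then (1:ℝ) else 0) - (if a = l then 1 else 0) := by
  rw [cpr, inner_sub_self_swap he hkl]
  rw [inner_sub_right, ee he, ee he]
  by_cases h1 : a = k <;> by_cases h2 : a = l <;> simp_all <;> norm_num

lemma cpr_long (m a : Fin n) :
    cpr (e a) ((2:ℝ) • e m) = if a = m then (1:ℝ) else 0 := by
  rw [cpr, inner_long_self he]
  rw [real_inner_smul_right, ee he]
  by_cases h : a = m <;> simp_all <;> norm_num

lemma sref_swap {k l : Fin n} (hkl : k ≠ l) (a : Fin n) :
    sref (e k - e l) (e a) = if a = k then e l else if a = l then e k else e a := by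
  rw [sref, cpr_swap he hkl]
  by_cases h1 : a = k <;> by_cases h2 : a = l <;> simp_all <;> abel

lemma sref_long (m a : Fin n) :
    sref ((2:ℝ) • e m) (e a) = if a = m then -e a else e a := by
  rw [sref, cpr_long he]
  by_cases h : a = m <;> simp_all
  module

/-- The simple roots belong to `Δ` for any `Δ` with the `C_n` description. -/
lemma sroot_inj : Function.Injective (sroot n e) := by
  intro k l h
  unfold sroot at h
  split_ifs at h with h1 h2 h2
  · -- both short
    have := congrArg (fun v => ⟪v, e k⟫) h
    simp only [inner_sub_left, ee he] at this
    have hk1 : (⟨(k:ℕ)+1, h1⟩ : Fin n) ≠ k := by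
      intro hc; have := congrArg Fin.val hc; simp at this
    by_cases hlk : l = k
    · exact hlk.symm
    · exfalso
      by_cases hlk1 : (⟨(l:ℕ)+1, h2⟩ : Fin n) = k <;>
        simp [hk1, hlk, hlk1] at this <;> norm_num at this
  · exfalso
    have := congrArg (fun v => ⟪v, e ⟨(k:ℕ)+1, h1⟩⟫) h
    have hk1 : k ≠ (⟨(k:ℕ)+1, h1⟩ : Fin n) := by
      intro hc; have := congrArg Fin.val hc; simp at this
    simp only [inner_sub_left, real_inner_smul_left, ee he, hk1] at this
    by_cases hl : l = (⟨(k:ℕ)+1, h1⟩ : Fin n) <;> simp [hl] at this <;> norm_num at this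
  · exfalso
    have := congrArg (fun v => ⟪v, e ⟨(l:ℕ)+1, h2⟩⟫) h
    have hl1 : l ≠ (⟨(l:ℕ)+1, h2⟩ : Fin n) := by
      intro hc; have := congrArg Fin.val hc; simp at this
    simp only [inner_sub_left, real_inner_smul_left, ee he, hl1] at this
    by_cases hk : k = (⟨(l:ℕ)+1, h2⟩ : Fin n) <;> simp [hk] at this <;> norm_num at this
  · -- both long
    have hk : (k : ℕ) = n - 1 := by omega
    have hl : (l : ℕ) = n - 1 := by omega
    exact Fin.ext (hk.trans hl.symm)

end CAux

section DAux
set_option linter.unusedSectionVars false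
open Finset
variable {V : Type*} [NormedAddCommGroup V] [InnerProductSpace ℝ V]
variable {n : ℕ} {e : Fin n → V} {Φ Δ : Finset V}

lemma Delta_eq (hn : 2 ≤ n) (hC : TypeCData Φ Δ n e) :
    Δ = Finset.image (sroot n e) univ := by
  apply Finset.coe_injective
  rw [Finset.coe_image, Finset.coe_univ, Set.image_univ, hC.2.2]
  ext v
  simp only [Set.mem_union, Set.mem_setOf_eq, Set.mem_range]
  constructor
  · rintro (⟨i, h, rfl⟩ | ⟨h0, rfl⟩)
    · exact ⟨i, by rw [sroot, dif_pos h]⟩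
    · refine ⟨⟨n - 1, by omega⟩, ?_⟩
      rw [sroot, dif_neg (by simp; omega)]
  · rintro ⟨k, rfl⟩
    unfold sroot
    split_ifs with h
    · exact Or.inl ⟨k, h, rfl⟩
    · refine Or.inr ⟨by omega, ?_⟩
      have hk := k.isLt
      have hkk : k = ⟨n - 1, by omega⟩ := Fin.ext (show (k:ℕ) = n - 1 by omega)
      exact congrArg (fun i => (2:ℝ) • e i) hkk

lemma sroot_mem_Delta (hn : 2 ≤ n) (hC : TypeCData Φ Δ n e) (k : Fin n) :
    sroot n e k ∈ Δ := by
  rw [Delta_eq hn hC]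
  exact Finset.mem_image_of_mem _ (mem_univ k)

lemma mem_Phi (hC : TypeCData Φ Δ n e) {v : V} : v ∈ Φ ↔
    ((∃ i j : Fin n, i ≠ j ∧ (v = e i - e j ∨ v = e i + e j ∨ v = -(e i + e j))) ∨
     (∃ i : Fin n, v = (2:ℝ) • e i ∨ v = -((2:ℝ) • e i))) := by
  rw [← Finset.mem_coe, hC.2.1]
  simp only [Set.mem_union, Set.mem_setOf_eq]

lemma mem_Pos {β : V} : β ∈ Pos Φ Δ ↔
    β ∈ Φ ∧ ∃ c : V → ℝ, (∀ α ∈ Δ, 0 ≤ c α) ∧ β = ∑ α ∈ Δ, c α • α := by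
  simp [Pos, Finset.mem_filter]

/-- Partial coordinate sums. -/
def csum (n : ℕ) (e : Fin n → V) (β : V) (k : Fin n) : ℝ :=
  ∑ t ∈ univ.filter (· ≤ k), ⟪β, e t⟫

/-- Coefficient of `β` on the `k`-th simple root. -/
def coeff (n : ℕ) (e : Fin n → V) (β : V) (k : Fin n) : ℝ :=
  (if (k : ℕ) = n - 1 then (2:ℝ)⁻¹ else 1) * csum n e β k

/-- Coefficient function on `V`. -/
def cf (n : ℕ) (e : Fin n → V) (β : V) : V → ℝ := fun v =>
  if h : ∃ k, sroot n e k = v then coeff n e β h.choose else 0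

lemma csum_eq_inner (β : V) (k : Fin n) :
    csum n e β k = ⟪β, ∑ t ∈ univ.filter (· ≤ k), e t⟫ :=
  (inner_sum _ _ _).symm

lemma weight_nonneg (k : Fin n) : (0:ℝ) ≤ if (k : ℕ) = n - 1 then (2:ℝ)⁻¹ else 1 := by
  split_ifs <;> norm_num

variable (he : Orthonormal ℝ e)
include he

lemma cf_sroot (β : V) (k : Fin n) : cf n e β (sroot n e k) = coeff n e β k := by
  have h : ∃ k', sroot n e k' = sroot n e k := ⟨k, rfl⟩
  rw [cf, dif_pos h, sroot_inj he h.choose_spec]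

lemma sum_image_sroot {M : Type*} [AddCommMonoid M] (F : V → M) :
    ∑ α ∈ Finset.image (sroot n e) univ, F α = ∑ k : Fin n, F (sroot n e k) :=
  Finset.sum_image fun k _ l _ h => sroot_inj he h

lemma csum_e (a k : Fin n) : csum n e (e a) k = if a ≤ k then 1 else 0 := by
  rw [csum]
  rw [show (∑ t ∈ univ.filter (· ≤ k), ⟪e a, e t⟫)
      = ∑ t ∈ univ.filter (· ≤ k), if a = t then (1:ℝ) else 0 from
    Finset.sum_congr rfl fun t _ => ee he a t]
  rw [Finset.sum_ite_eq]
  simp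

lemma csum_add (x y : V) (k : Fin n) :
    csum n e (x + y) k = csum n e x k + csum n e y k := by
  simp [csum, inner_add_left, Finset.sum_add_distrib]

lemma csum_sub (x y : V) (k : Fin n) :
    csum n e (x - y) k = csum n e x k - csum n e y k := by
  simp [csum, inner_sub_left, Finset.sum_sub_distrib]

lemma csum_neg (x : V) (k : Fin n) : csum n e (-x) k = - csum n e x k := by
  simp [csum, inner_neg_left]

lemma csum_smul (c : ℝ) (x : V) (k : Fin n) : csum n e (c • x) k = c * csum n e x k := by
  simp [csum, real_inner_smul_left, Finset.mul_sum]

lemma coeff_sub (x y : V) (k : Fin n) :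
    coeff n e (x - y) k = coeff n e x k - coeff n e y k := by
  simp [coeff, csum_sub he, mul_sub]

lemma coeff_add (x y : V) (k : Fin n) :
    coeff n e (x + y) k = coeff n e x k + coeff n e y k := by
  simp [coeff, csum_add he, mul_add]

lemma coeff_smul (c : ℝ) (x : V) (k : Fin n) :
    coeff n e (c • x) k = c * coeff n e x k := by
  rw [coeff, coeff, csum_smul he]; ring

/-- The telescoping representation of a basis vector on the simple roots. -/
lemma rep_e (hn : 1 ≤ n) (a : Fin n) :
    ∑ k : Fin n, coeff n e (e a) k • sroot n e k = e a := by
  obtain ⟨m, rfl⟩ : ∃ m, n = m + 1 := ⟨n - 1, by omega⟩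
  set f : Fin (m+1) → V := fun t => if a ≤ t then e t else e a with hf
  set F : ℕ → V := fun t => if h : t < m + 1 then f ⟨t, h⟩ else 0 with hF
  rw [Fin.sum_univ_castSucc]
  have hlast : coeff (m+1) e (e a) (Fin.last m) • sroot (m+1) e (Fin.last m)
      = e (Fin.last m) := by
    rw [coeff, csum_e he, if_pos (Fin.le_last a), sroot, dif_neg (by simp)]
    rw [if_pos (show ((Fin.last m : ℕ)) = m + 1 - 1 by simp)]
    rw [mul_one, smul_smul]
    norm_num
  have hterm : ∀ k : Fin m,
      coeff (m+1) e (e a) k.castSucc • sroot (m+1) e k.castSucc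
        = F (k : ℕ) - F ((k : ℕ) + 1) := by
    intro k
    have hlt := k.isLt
    have h1 : ((k.castSucc : ℕ)) + 1 < m + 1 := by
      simp only [Fin.coe_castSucc]
      omega
    have hFval : ∀ (t : ℕ) (h2 : t < m + 1), F t = f ⟨t, h2⟩ := by
      intro t h2
      simp only [hF]
      rw [dif_pos h2]
    have hFc : F (k : ℕ) = f k.castSucc :=
      (hFval (k : ℕ) (by omega)).trans (congrArg f (Fin.ext rfl))
    have hFs : F ((k : ℕ) + 1) = f k.succ :=
      (hFval ((k : ℕ) + 1) (by omega)).trans (congrArg f (Fin.ext rfl))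
    rw [hFc, hFs]
    rw [coeff, csum_e he, sroot, dif_pos h1]
    rw [if_neg (show ¬((k.castSucc : ℕ) = m + 1 - 1) by simp; omega)]
    rw [show (⟨(k.castSucc : ℕ) + 1, h1⟩ : Fin (m+1)) = k.succ from Fin.ext (by simp)]
    simp only [hf, one_mul]
    by_cases hca : a ≤ k.castSucc
    · have hsa : a ≤ k.succ := le_trans hca (by rw [Fin.le_def]; simp)
      rw [if_pos hca, if_pos hca, if_pos hsa, one_smul]
    · rw [if_neg hca, if_neg hca, zero_smul]
      by_cases hsa : a ≤ k.succ
      · have hak : a = k.succ := by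
          rw [Fin.le_def] at hca hsa
          apply Fin.ext
          simp only [Fin.coe_castSucc, not_le, Fin.val_succ] at hca hsa ⊢
          omega
        rw [if_pos hsa, hak, sub_self]
      · rw [if_neg hsa, sub_self]
  rw [Finset.sum_congr rfl fun k _ => hterm k]
  rw [Fin.sum_univ_eq_sum_range (fun t => F t - F (t + 1)) m]
  rw [Finset.sum_range_sub' F m]
  have hF0 : F 0 = e a := by
    have h2 : 0 < m + 1 := by omega
    simp only [hF]
    rw [dif_pos h2]
    simp only [hf]
    by_cases h : a ≤ (⟨0, by omega⟩ : Fin (m+1))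
    · have ha : a = ⟨0, by omega⟩ := le_antisymm h (by rw [Fin.le_def]; simp)
      rw [if_pos h, ha]
    · rw [if_neg h]
  have hFm : F m = e (Fin.last m) := by
    have h2 : m < m + 1 := by omega
    simp only [hF]
    rw [dif_pos h2]
    simp only [hf]
    have hle : a ≤ (⟨m, by omega⟩ : Fin (m+1)) := by
      rw [Fin.le_def]
      simp
      omega
    rw [if_pos hle]
    rfl
  rw [hF0, hFm, hlast]
  abel

lemma rep_sub (hn : 1 ≤ n) (i j : Fin n) :
    ∑ k : Fin n, coeff n e (e i - e j) k • sroot n e k = e i - e j := by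
  simp_rw [coeff_sub he, sub_smul, Finset.sum_sub_distrib, rep_e he hn]

lemma rep_add (hn : 1 ≤ n) (i j : Fin n) :
    ∑ k : Fin n, coeff n e (e i + e j) k • sroot n e k = e i + e j := by
  simp_rw [coeff_add he, add_smul, Finset.sum_add_distrib, rep_e he hn]

lemma rep_long (hn : 1 ≤ n) (i : Fin n) :
    ∑ k : Fin n, coeff n e ((2:ℝ) • e i) k • sroot n e k = (2:ℝ) • e i := by
  simp_rw [coeff_smul he, mul_smul, ← Finset.smul_sum, rep_e he hn]

lemma csum_sroot_nonneg (k' k : Fin n) : 0 ≤ csum n e (sroot n e k') k := by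
  rw [sroot]
  split_ifs with h
  · rw [csum_sub he, csum_e he, csum_e he]
    by_cases h2 : (⟨(k':ℕ)+1, h⟩ : Fin n) ≤ k
    · have h1 : k' ≤ k := by
        rw [Fin.le_def] at h2 ⊢; simp at h2; omega
      simp [h1, h2]
    · split_ifs <;> norm_num
  · rw [csum_smul he, csum_e he]
    split_ifs <;> norm_num

lemma csum_nonneg_of_pos (hn : 2 ≤ n) (hC : TypeCData Φ Δ n e) {β : V}
    (hβ : β ∈ Pos Φ Δ) (k : Fin n) : 0 ≤ csum n e β k := by
  obtain ⟨-, c, hc, hrep⟩ := mem_Pos.mp hβ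
  have hcs : csum n e β k = ∑ α ∈ Δ, c α * csum n e α k := by
    rw [hrep, csum_eq_inner, sum_inner]
    refine Finset.sum_congr rfl fun α _ => ?_
    rw [real_inner_smul_left, ← csum_eq_inner]
  rw [hcs]
  refine Finset.sum_nonneg fun α hα => ?_
  have h0 := hc α hα
  rw [Delta_eq hn hC] at hα
  obtain ⟨k', -, rfl⟩ := Finset.mem_image.mp hα
  exact mul_nonneg h0 (csum_sroot_nonneg he k' k)

lemma Pos_eq (hn : 2 ≤ n) (hC : TypeCData Φ Δ n e) : Pos Φ Δ = PosC n e := by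
  have hn1 : 1 ≤ n := by omega
  apply Finset.Subset.antisymm
  · -- Pos ⊆ PosC
    intro v hv
    have hcs := csum_nonneg_of_pos he hn hC hv
    have hvΦ : v ∈ Φ := (mem_Pos.mp hv).1
    rw [mem_Phi hC] at hvΦ
    rw [mem_PosC]
    rcases hvΦ with ⟨i, j, hij, rfl | rfl | rfl⟩ | ⟨i, rfl | rfl⟩
    · rcases lt_or_gt_of_ne hij with h | h
      · exact Or.inl ⟨i, j, h, rfl⟩
      · exfalso
        have := hcs j
        rw [csum_sub he, csum_e he, csum_e he, if_neg (not_le.mpr h), if_pos le_rfl] at this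
        linarith
    · rcases lt_or_gt_of_ne hij with h | h
      · exact Or.inr (Or.inl ⟨i, j, h, rfl⟩)
      · exact Or.inr (Or.inl ⟨j, i, h, by rw [add_comm]⟩)
    · exfalso
      have := hcs j
      rw [csum_neg he, csum_add he, csum_e he, csum_e he, if_pos le_rfl] at this
      split_ifs at this <;> linarith
    · exact Or.inr (Or.inr ⟨i, rfl⟩)
    · exfalso
      have := hcs i
      rw [csum_neg he, csum_smul he, csum_e he, if_pos le_rfl] at this
      linarith
  · -- PosC ⊆ Pos
    intro v hv
    rw [mem_PosC] at hv
    rw [mem_Pos]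
    constructor
    · rw [mem_Phi hC]
      rcases hv with ⟨i, j, hij, rfl⟩ | ⟨i, j, hij, rfl⟩ | ⟨i, rfl⟩
      · exact Or.inl ⟨i, j, ne_of_lt hij, Or.inl rfl⟩
      · exact Or.inl ⟨i, j, ne_of_lt hij, Or.inr (Or.inl rfl)⟩
      · exact Or.inr ⟨i, Or.inl rfl⟩
    · refine ⟨cf n e v, ?_, ?_⟩
      · intro α hα
        rw [Delta_eq hn hC] at hα
        obtain ⟨k, -, rfl⟩ := Finset.mem_image.mp hα
        rw [cf_sroot he]
        refine mul_nonneg (weight_nonneg k) ?_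
        rcases hv with ⟨i, j, hij, rfl⟩ | ⟨i, j, hij, rfl⟩ | ⟨i, rfl⟩
        · rw [csum_sub he, csum_e he, csum_e he]
          by_cases hj : j ≤ k
          · simp [le_trans (le_of_lt hij) hj, hj]
          · split_ifs <;> norm_num
        · rw [csum_add he, csum_e he, csum_e he]
          split_ifs <;> norm_num
        · rw [csum_smul he, csum_e he]
          split_ifs <;> norm_num
      · rw [Delta_eq hn hC, sum_image_sroot he]
        have : ∀ k : Fin n, cf n e v (sroot n e k) • sroot n e k
            = coeff n e v k • sroot n e k := fun k => by rw [cf_sroot he]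
        rw [Finset.sum_congr rfl fun k _ => this k]
        rcases hv with ⟨i, j, hij, rfl⟩ | ⟨i, j, hij, rfl⟩ | ⟨i, rfl⟩
        · exact (rep_sub he hn1 i j).symm
        · exact (rep_add he hn1 i j).symm
        · exact (rep_long he hn1 i).symm

end DAux

section EAux
set_option linter.unusedSectionVars false
open Finset
variable {V : Type*} [NormedAddCommGroup V] [InnerProductSpace ℝ V]
variable {n : ℕ} {e : Fin n → V} {Φ Δ : Finset V}

/-- A strictly dominant vector. -/
def rvec (n : ℕ) (e : Fin n → V) : V := ∑ t : Fin n, ((n:ℝ) - ((t:ℕ):ℝ)) • e t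

lemma mem_P1' {i j : Fin n} (hij : i < j) : e i - e j ∈ PosC n e :=
  (mem_PosC n e).mpr (Or.inl ⟨i, j, hij, rfl⟩)

lemma mem_P2' {i j : Fin n} (hij : i ≠ j) : e i + e j ∈ PosC n e := by
  rcases lt_or_gt_of_ne hij with h | h
  · exact (mem_PosC n e).mpr (Or.inr (Or.inl ⟨i, j, h, rfl⟩))
  · exact (mem_PosC n e).mpr (Or.inr (Or.inl ⟨j, i, h, by rw [add_comm]⟩))

lemma mem_P3' (i : Fin n) : (2:ℝ) • e i ∈ PosC n e :=
  (mem_PosC n e).mpr (Or.inr (Or.inr ⟨i, rfl⟩))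

variable (he : Orthonormal ℝ e)
include he

lemma inner_rvec (a : Fin n) : ⟪rvec n e, e a⟫ = (n:ℝ) - ((a:ℕ):ℝ) := by
  rw [rvec, sum_inner]
  have : ∀ t : Fin n, ⟪((n:ℝ) - ((t:ℕ):ℝ)) • e t, e a⟫
      = if t = a then (n:ℝ) - ((t:ℕ):ℝ) else 0 := by
    intro t
    rw [real_inner_smul_left, ee he]
    split_ifs <;> ring
  rw [Finset.sum_congr rfl fun t _ => this t, Finset.sum_ite_eq']
  simp

lemma rvec_pos {δ : V} (hδ : δ ∈ PosC n e) : 0 < ⟪rvec n e, δ⟫ := by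
  rcases (mem_PosC n e).mp hδ with ⟨i, j, hij, rfl⟩ | ⟨i, j, hij, rfl⟩ | ⟨i, rfl⟩
  · rw [inner_sub_right, inner_rvec he, inner_rvec he]
    have : ((i:ℕ):ℝ) < ((j:ℕ):ℝ) := by exact_mod_cast hij
    linarith
  · rw [inner_add_right, inner_rvec he, inner_rvec he]
    have h1 : ((i:ℕ):ℝ) < (n:ℝ) := by exact_mod_cast i.isLt
    have h2 : ((j:ℕ):ℝ) < (n:ℝ) := by exact_mod_cast j.isLt
    linarith
  · rw [real_inner_smul_right, inner_rvec he]
    have h1 : ((i:ℕ):ℝ) < (n:ℝ) := by exact_mod_cast i.isLt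
    linarith

lemma neg_not_mem_PosC {δ : V} (hδ : δ ∈ PosC n e) : -δ ∉ PosC n e := by
  intro h
  have h1 := rvec_pos he hδ
  have h2 := rvec_pos he h
  rw [inner_neg_right] at h2
  linarith

/-- Simple reflections permute the other positive roots. -/
lemma sref_sroot_pos (k : Fin n) {δ : V} (hδ : δ ∈ PosC n e)
    (hne : δ ≠ sroot n e k) : sref (sroot n e k) δ ∈ PosC n e := by
  rw [sroot] at hne ⊢
  by_cases h : (k:ℕ) + 1 < n
  · -- short simple root `e k - e l`, `l = k+1`
    rw [dif_pos h] at hne ⊢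
    set l : Fin n := ⟨(k:ℕ)+1, h⟩ with hl
    have hkl : k ≠ l := by
      intro hc
      have := congrArg Fin.val hc
      simp [hl] at this
    have hswap : ∀ a : Fin n, sref (e k - e l) (e a)
        = e (if a = k then l else if a = l then k else a) := by
      intro a
      rw [sref_swap he hkl a, apply_ite e, apply_ite e]
    rcases (mem_PosC n e).mp hδ with ⟨i, j, hij, rfl⟩ | ⟨i, j, hij, rfl⟩ | ⟨i, rfl⟩
    · have hne' : ¬(i = k ∧ j = l) := by
        rintro ⟨rfl, rfl⟩; exact hne rfl
      rw [sref_sub, hswap, hswap]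
      apply mem_P1'
      rw [Fin.lt_def] at hij ⊢
      have hlv : (l:ℕ) = (k:ℕ) + 1 := rfl
      have hiv : ¬((i:ℕ) = k ∧ (j:ℕ) = l) := by
        intro ⟨h1, h2⟩
        exact hne' ⟨Fin.ext h1, Fin.ext h2⟩
      split_ifs with h1 h2 h3 h4 h5 h6 h7 <;>
        first
        | omega
        | (exfalso
           revert hij hiv
           simp_all [Fin.ext_iff]
           omega)
        | (simp_all [Fin.ext_iff]; omega)
    · rw [sref_add, hswap, hswap]
      apply mem_P2'
      rw [Fin.lt_def] at hij
      have hlv : (l:ℕ) = (k:ℕ) + 1 := rfl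
      intro hc
      rw [Fin.ext_iff] at hc
      revert hc
      split_ifs <;> simp_all [Fin.ext_iff] <;> omega
    · rw [sref_smul, hswap]
      exact mem_P3' _
  · -- long simple root `2 e k`, `k = n-1`
    rw [dif_neg h] at hne ⊢
    have hk : (k:ℕ) = n - 1 := by
      have := k.isLt; omega
    have hmax : ∀ a : Fin n, a ≤ k := by
      intro a
      rw [Fin.le_def, hk]
      have := a.isLt; omega
    rcases (mem_PosC n e).mp hδ with ⟨i, j, hij, rfl⟩ | ⟨i, j, hij, rfl⟩ | ⟨i, rfl⟩
    · have hik : i ≠ k := by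
        intro hc; subst hc
        exact absurd (lt_of_lt_of_le hij (hmax j)) (lt_irrefl i)
      rw [sref_sub, sref_long he k i, sref_long he k j, if_neg hik]
      by_cases hjk : j = k
      · rw [if_pos hjk, sub_neg_eq_add]
        exact mem_P2' (ne_of_lt hij)
      · rw [if_neg hjk]
        exact mem_P1' hij
    · have hik : i ≠ k := by
        intro hc; subst hc
        exact absurd (lt_of_lt_of_le hij (hmax j)) (lt_irrefl i)
      rw [sref_add, sref_long he k i, sref_long he k j, if_neg hik]
      by_cases hjk : j = k
      · rw [if_pos hjk, ← sub_eq_add_neg]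
        exact mem_P1' hij
      · rw [if_neg hjk]
        exact mem_P2' (ne_of_lt hij)
    · have hik : i ≠ k := fun hc => hne (by rw [hc])
      rw [sref_smul, sref_long he k i, if_neg hik]
      exact mem_P3' i

/-- Any word of length `m` makes at most `m` positive roots negative. -/
lemma card_neg_le (hn : 2 ≤ n) (hRS : IsRS Φ Δ) (hC : TypeCData Φ Δ n e)
    {w : V → V} {m : ℕ} (hw : IsWord Δ w m) :
    ((PosC n e).filter (fun δ => -(w δ) ∈ PosC n e)).card ≤ m := by
  obtain ⟨l, hlen, hmem, rfl⟩ := hw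
  subst hlen
  induction l with
  | nil =>
    rw [show (((List.map sref ([] : List V)).foldr (· ∘ ·) id) : V → V) = id from rfl]
    have : ((PosC n e).filter (fun δ => -(id δ : V) ∈ PosC n e)) = ∅ := by
      apply Finset.eq_empty_of_forall_notMem
      intro δ hδ
      rw [Finset.mem_filter] at hδ
      exact neg_not_mem_PosC he hδ.1 hδ.2
    rw [this]
    simp
  | cons f l ih =>
    have hmem' : ∀ α ∈ l, α ∈ Δ := fun α hα => hmem α (by simp [hα])
    have hf : f ∈ Δ := hmem f (by simp)
    obtain ⟨k, -, hfk⟩ := Finset.mem_image.mp (by rw [Delta_eq hn hC] at hf; exact hf)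
    set w' : V → V := (List.map sref l).foldr (· ∘ ·) id with hw'
    have hword' : IsWord Δ w' l.length := ⟨l, rfl, hmem', rfl⟩
    have hstep : (List.map sref (f :: l)).foldr (· ∘ ·) id = sref f ∘ w' := rfl
    rw [hstep]
    set B := (PosC n e).filter (fun δ => -((sref f ∘ w') δ) ∈ PosC n e) with hB
    set B' := (PosC n e).filter (fun δ => -(w' δ) ∈ PosC n e) with hB'
    have hBsub : B ⊆ B' ∪ (B \ B') := by
      intro x hx
      rw [Finset.mem_union, Finset.mem_sdiff]
      by_cases h : x ∈ B'
      · exact Or.inl h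
      · exact Or.inr ⟨hx, h⟩
    have hcard1 : (B \ B').card ≤ 1 := by
      rw [Finset.card_le_one]
      have key : ∀ x ∈ B \ B', w' x = f := by
        intro x hx
        rw [Finset.mem_sdiff, hB, hB', Finset.mem_filter, Finset.mem_filter] at hx
        obtain ⟨⟨hx1, hx2⟩, hx3⟩ := hx
        have hx4 : ¬(-(w' x) ∈ PosC n e) := fun hc => hx3 ⟨hx1, hc⟩
        -- w' x is a root
        have hxΦ : x ∈ Φ := by
          have : PosC n e ⊆ Φ := by
            rw [← Pos_eq he hn hC]
            exact Finset.filter_subset _ _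
          exact this hx1
        have hwxΦ : w' x ∈ Φ := hword'.maps_root hRS x hxΦ
        have hwxPos : w' x ∈ PosC n e := by
          rcases hRS.pos_or_neg (w' x) hwxΦ with hp | hp
          · rwa [Pos_eq he hn hC] at hp
          · rw [Pos_eq he hn hC] at hp
            exact absurd hp hx4
        by_contra hne
        have : sref f (w' x) ∈ PosC n e := by
          rw [← hfk] at hne ⊢
          exact sref_sroot_pos he k hwxPos (fun hc => hne (hc ▸ rfl))
        exact neg_not_mem_PosC he this (by simpa using hx2)
      intro a ha b hb
      have := (key a ha).trans (key b hb).symm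
      exact hword'.injective this
    calc B.card ≤ (B' ∪ (B \ B')).card := Finset.card_le_card hBsub
      _ ≤ B'.card + (B \ B').card := Finset.card_union_le _ _
      _ ≤ l.length + 1 := Nat.add_le_add (ih hmem') hcard1
      _ = (f :: l).length := by simp

end EAux

section FAux
set_option linter.unusedSectionVars false
open Finset
variable {V : Type*} [NormedAddCommGroup V] [InnerProductSpace ℝ V]
variable {n : ℕ} {e : Fin n → V} {Φ Δ : Finset V}
variable (he : Orthonormal ℝ e)
include he

lemma e_inj : Function.Injective e := by
  intro x y h
  by_contra hne
  have h1 := ee he x y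
  have h2 := ee he y y
  rw [h, h2] at h1
  simp [hne] at h1

lemma sref_swap_e {k l : Fin n} (hkl : k ≠ l) (a : Fin n) :
    sref (e k - e l) (e a) = e (if a = k then l else if a = l then k else a) := by
  rw [sref_swap he hkl a, apply_ite e, apply_ite e]

variable (hn : 2 ≤ n) (hC : TypeCData Φ Δ n e)
include hn hC

lemma word_short : ∀ d : ℕ, ∀ i j : Fin n, 1 ≤ d → (i:ℕ) + d = (j:ℕ) →
    IsWord Δ (sref (e i - e j)) (2*d - 1) := by
  intro d
  induction d with
  | zero => intro i j hd; exact absurd hd (by norm_num)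
  | succ d ih =>
    intro i j hd hij
    by_cases hd0 : d = 0
    · subst hd0
      have hjlt := j.isLt
      have hj : j = ⟨(i:ℕ)+1, by omega⟩ := Fin.ext (show (j:ℕ) = (i:ℕ)+1 by omega)
      have hsr : e i - e j = sroot n e i := by
        rw [sroot, dif_pos (show (i:ℕ)+1 < n by omega)]
        exact congrArg (fun t => e i - e t) hj
      rw [hsr]
      have := isWord_sref (sroot_mem_Delta hn hC i)
      simpa using this
    · have hjlt := j.isLt
      set j' : Fin n := ⟨(j:ℕ) - 1, by omega⟩ with hj'
      have hij' : (i:ℕ) + d = (j':ℕ) := by simp [hj']; omega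
      have hword := ih i j' (by omega) hij'
      have hj'1 : (j':ℕ) + 1 < n := by simp [hj']; omega
      have hj'j : j' ≠ j := by
        intro hc; have := congrArg Fin.val hc; simp [hj'] at this; omega
      have hsr : sroot n e j' = e j' - e j := by
        rw [sroot, dif_pos hj'1]
        congr 2
        exact Fin.ext (by simp [hj']; omega)
      have hine1 : i ≠ j' := by
        intro hc; have := congrArg Fin.val hc; simp [hj'] at this; omega
      have hine2 : i ≠ j := by
        intro hc; have := congrArg Fin.val hc; omega
      have hc1 : sref (sroot n e j') (e i - e j') = e i - e j := by
        rw [hsr, sref_sub, sref_swap_e he hj'j i, sref_swap_e he hj'j j']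
        rw [if_neg hine1, if_neg hine2, if_pos rfl]
      have hfin := hword.conj (sroot_mem_Delta hn hC j')
      rw [hc1] at hfin
      rw [show 2*(d+1) - 1 = 2*d - 1 + 2 by omega]
      exact hfin

lemma word_long : ∀ d : ℕ, ∀ i : Fin n, (i:ℕ) + d = n - 1 →
    IsWord Δ (sref ((2:ℝ) • e i)) (2*d + 1) := by
  intro d
  induction d with
  | zero =>
    intro i hi
    have hsr : (2:ℝ) • e i = sroot n e i := by
      rw [sroot, dif_neg (by omega)]
    rw [hsr]
    exact isWord_sref (sroot_mem_Delta hn hC i)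
  | succ d ih =>
    intro i hi
    set i' : Fin n := ⟨(i:ℕ) + 1, by omega⟩ with hi'
    have hword := ih i' (by simp [hi']; omega)
    have hii' : i ≠ i' := by
      intro hc; have := congrArg Fin.val hc; simp [hi'] at this
    have hsr : sroot n e i = e i - e i' := by
      rw [sroot, dif_pos (show (i:ℕ)+1 < n by omega)]
    have hc1 : sref (sroot n e i) ((2:ℝ) • e i') = (2:ℝ) • e i := by
      rw [hsr, sref_smul, sref_swap_e he hii' i']
      rw [if_neg (Ne.symm hii'), if_pos rfl]
    have hfin := hword.conj (sroot_mem_Delta hn hC i)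
    rw [hc1] at hfin
    rw [show 2*(d+1) + 1 = 2*d + 1 + 2 by omega]
    exact hfin

lemma word_chainup : ∀ d : ℕ, ∀ i k j : Fin n, ∀ m : ℕ, i < k → (k:ℕ) + d = (j:ℕ) →
    IsWord Δ (sref (e i - e k)) m → IsWord Δ (sref (e i - e j)) (m + 2*d) := by
  intro d
  induction d with
  | zero =>
    intro i k j m hik hkj hw
    have : k = j := Fin.ext (by omega)
    subst this
    simpa using hw
  | succ d ih =>
    intro i k j m hik hkj hw
    have hjlt := j.isLt
    set k' : Fin n := ⟨(k:ℕ) + 1, by omega⟩ with hk'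
    have hkk' : k ≠ k' := by
      intro hc; have := congrArg Fin.val hc; simp [hk'] at this
    have hsr : sroot n e k = e k - e k' := by
      rw [sroot, dif_pos (show (k:ℕ)+1 < n by omega)]
    have hik' : i ≠ k' := by
      intro hc; have := congrArg Fin.val hc
      rw [Fin.lt_def] at hik; simp [hk'] at this; omega
    have hc1 : sref (sroot n e k) (e i - e k) = e i - e k' := by
      rw [hsr, sref_sub, sref_swap_e he hkk' i, sref_swap_e he hkk' k]
      rw [if_neg (ne_of_lt hik), if_neg hik', if_pos rfl]
    have hw2 := hw.conj (sroot_mem_Delta hn hC k)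
    rw [hc1] at hw2
    have hik'2 : i < k' := by
      rw [Fin.lt_def] at hik ⊢; simp [hk']; omega
    have := ih i k' j (m + 2) hik'2 (by simp [hk']; omega) hw2
    rw [show m + 2*(d+1) = m + 2 + 2*d by omega]
    exact this

lemma word_flip (i k : Fin n) (m : ℕ) (hik : i < k) (hk : (k:ℕ) = n - 1)
    (hw : IsWord Δ (sref (e i - e k)) m) : IsWord Δ (sref (e i + e k)) (m + 2) := by
  have hsr : sroot n e k = (2:ℝ) • e k := by
    rw [sroot, dif_neg (by omega)]
  have hc1 : sref (sroot n e k) (e i - e k) = e i + e k := by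
    rw [hsr, sref_sub, sref_long he k i, sref_long he k k]
    rw [if_neg (ne_of_lt hik), if_pos rfl, sub_neg_eq_add]
  have hw2 := hw.conj (sroot_mem_Delta hn hC k)
  rwa [hc1] at hw2

lemma word_chaindown : ∀ d : ℕ, ∀ i j k : Fin n, ∀ m : ℕ, i < j → (j:ℕ) + d = (k:ℕ) →
    IsWord Δ (sref (e i + e k)) m → IsWord Δ (sref (e i + e j)) (m + 2*d) := by
  intro d
  induction d with
  | zero =>
    intro i j k m hij hjk hw
    have : j = k := Fin.ext (by omega)
    subst this
    simpa using hw
  | succ d ih =>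
    intro i j k m hij hjk hw
    have hklt := k.isLt
    set k' : Fin n := ⟨(k:ℕ) - 1, by omega⟩ with hk'
    have hkk' : k' ≠ k := by
      intro hc; have := congrArg Fin.val hc; simp [hk'] at this; omega
    have hsr : sroot n e k' = e k' - e k := by
      rw [sroot, dif_pos (show (k':ℕ)+1 < n by simp [hk']; omega)]
      congr 2
      exact Fin.ext (by simp [hk']; omega)
    have hik' : i ≠ k' := by
      intro hc; have := congrArg Fin.val hc
      rw [Fin.lt_def] at hij; simp [hk'] at this; omega
    have hik : i ≠ k := by
      intro hc; have := congrArg Fin.val hc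
      rw [Fin.lt_def] at hij; omega
    have hc1 : sref (sroot n e k') (e i + e k) = e i + e k' := by
      rw [hsr, sref_add, sref_swap_e he hkk' i, sref_swap_e he hkk' k]
      rw [if_neg hik', if_neg hik, if_neg (Ne.symm hkk'), if_pos rfl]
    have hw2 := hw.conj (sroot_mem_Delta hn hC k')
    rw [hc1] at hw2
    have := ih i j k' (m + 2) hij (by simp [hk']; omega) hw2
    rw [show m + 2*(d+1) = m + 2 + 2*d by omega]
    exact this

lemma word_P1 {i j : Fin n} (hij : i < j) :
    IsWord Δ (sref (e i - e j)) (2*((j:ℕ) - (i:ℕ)) - 1) :=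
  word_short he hn hC ((j:ℕ) - (i:ℕ)) i j (by rw [Fin.lt_def] at hij; omega)
    (by rw [Fin.lt_def] at hij; omega)

lemma word_P3 (i : Fin n) :
    IsWord Δ (sref ((2:ℝ) • e i)) (2*(n - 1 - (i:ℕ)) + 1) :=
  word_long he hn hC (n - 1 - (i:ℕ)) i (by have := i.isLt; omega)

lemma word_P2 {i j : Fin n} (hij : i < j) :
    IsWord Δ (sref (e i + e j))
      (2*((j:ℕ) - (i:ℕ)) - 1 + 2*(n - 1 - (j:ℕ)) + 2 + 2*(n - 1 - (j:ℕ))) := by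
  have hjlt := j.isLt
  have hijv : (i:ℕ) < (j:ℕ) := hij
  set last : Fin n := ⟨n - 1, by omega⟩ with hlast
  have hjlast : (j:ℕ) + (n - 1 - (j:ℕ)) = (last:ℕ) := by simp [hlast]; omega
  have hilast : i < last := by
    rw [Fin.lt_def]; simp [hlast]; omega
  have w1 := word_chainup he hn hC (n - 1 - (j:ℕ)) i j last _ hij hjlast (word_P1 he hn hC hij)
  have w2 := word_flip he hn hC i last _ hilast (by simp [hlast]) w1
  have w3 := word_chaindown he hn hC (n - 1 - (j:ℕ)) i j last _ hij hjlast w2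
  exact w3

end FAux

section GAux
set_option linter.unusedSectionVars false
open Finset
variable {V : Type*} [NormedAddCommGroup V] [InnerProductSpace ℝ V]
variable {n : ℕ} {e : Fin n → V} {Φ Δ : Finset V}
variable (he : Orthonormal ℝ e)
include he

lemma inner_w0 (a : Fin n) : ⟪e a, ∑ t : Fin n, e t⟫ = 1 := by
  rw [inner_sum]
  rw [Finset.sum_congr rfl fun t _ => ee he a t]
  rw [Finset.sum_ite_eq]
  simp

lemma disj_P1_P2 : Disjoint (P1 n e) (P2 n e) := by
  rw [Finset.disjoint_left]
  intro v hv1 hv2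
  obtain ⟨i, j, hij, rfl⟩ := (mem_P1 n e).mp hv1
  obtain ⟨a, b, hab, hv⟩ := (mem_P2 n e).mp hv2
  have := congrArg (fun x => ⟪(x:V), ∑ t : Fin n, e t⟫) hv
  simp only [inner_sub_left, inner_add_left, inner_w0 he] at this
  norm_num at this

lemma disj_P1_P3 : Disjoint (P1 n e) (P3 n e) := by
  rw [Finset.disjoint_left]
  intro v hv1 hv2
  obtain ⟨i, j, hij, rfl⟩ := (mem_P1 n e).mp hv1
  obtain ⟨a, hv⟩ := (mem_P3 n e).mp hv2
  have := congrArg (fun x => ⟪(x:V), ∑ t : Fin n, e t⟫) hv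
  simp only [inner_sub_left, real_inner_smul_left, inner_w0 he] at this
  norm_num at this

lemma disj_P2_P3 : Disjoint (P2 n e) (P3 n e) := by
  rw [Finset.disjoint_left]
  intro v hv1 hv2
  obtain ⟨i, j, hij, rfl⟩ := (mem_P2 n e).mp hv1
  obtain ⟨a, hv⟩ := (mem_P3 n e).mp hv2
  have := congrArg (fun x => ⟪(x:V), e i⟫) hv
  simp only [inner_add_left, real_inner_smul_left, ee he, if_pos rfl] at this
  rw [if_neg (Ne.symm (ne_of_lt hij))] at this
  by_cases hai : a = i <;> simp [hai] at this <;> norm_num at this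

lemma injOn_P1 : ∀ p ∈ (univ : Finset (Fin n × Fin n)).filter (fun p => p.1 < p.2),
    ∀ q ∈ (univ : Finset (Fin n × Fin n)).filter (fun p => p.1 < p.2),
    e p.1 - e p.2 = e q.1 - e q.2 → p = q := by
  intro p hp q hq h
  rw [Finset.mem_filter] at hp hq
  have h1 := congrArg (fun x => ⟪(x:V), e p.1⟫) h
  simp only [inner_sub_left, ee he, if_pos rfl] at h1
  rw [if_neg (Ne.symm (ne_of_lt hp.2))] at h1
  have hq1 : q.1 = p.1 := by
    by_cases ha : q.1 = p.1
    · exact ha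
    · exfalso
      by_cases hb : q.2 = p.1 <;> simp [ha, hb] at h1 <;> norm_num at h1
  have h2 : e p.2 = e q.2 := by
    rw [hq1] at h
    exact sub_right_injective h
  exact Prod.ext hq1.symm (e_inj he h2)

lemma injOn_P2 : ∀ p ∈ (univ : Finset (Fin n × Fin n)).filter (fun p => p.1 < p.2),
    ∀ q ∈ (univ : Finset (Fin n × Fin n)).filter (fun p => p.1 < p.2),
    e p.1 + e p.2 = e q.1 + e q.2 → p = q := by
  intro p hp q hq h
  rw [Finset.mem_filter] at hp hq
  by_cases ha : q.1 = p.1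
  · have h2 : e p.2 = e q.2 := by
      rw [ha] at h
      exact add_left_cancel h
    exact Prod.ext ha.symm (e_inj he h2)
  · exfalso
    have h1 := congrArg (fun x => ⟪(x:V), e p.1⟫) h
    simp only [inner_add_left, ee he, if_pos rfl] at h1
    rw [if_neg (Ne.symm (ne_of_lt hp.2)), if_neg ha] at h1
    have hb : q.2 = p.1 := by
      by_cases hb : q.2 = p.1
      · exact hb
      · rw [if_neg hb] at h1; norm_num at h1
    have h2 : e p.2 = e q.1 := by
      rw [hb] at h
      exact add_left_cancel (h.trans (add_comm _ _))
    have h3 : p.2 = q.1 := e_inj he h2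
    have l1 := Fin.lt_def.mp hp.2
    have l2 := Fin.lt_def.mp hq.2
    have e1 : (q.2:ℕ) = (p.1:ℕ) := congrArg Fin.val hb
    have e2 : (p.2:ℕ) = (q.1:ℕ) := congrArg Fin.val h3
    omega

lemma Spos_eq : ∑ δ ∈ PosC n e, δ
    = (∑ p ∈ (univ : Finset (Fin n × Fin n)).filter (fun p => p.1 < p.2), (2:ℝ) • e p.1)
      + ∑ i : Fin n, (2:ℝ) • e i := by
  rw [PosC]
  rw [Finset.sum_union (by
    rw [Finset.disjoint_union_left]
    exact ⟨disj_P1_P3 he, disj_P2_P3 he⟩)]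
  rw [Finset.sum_union (disj_P1_P2 he)]
  rw [P1, Finset.sum_image (injOn_P1 he), P2, Finset.sum_image (injOn_P2 he),
      P3, Finset.sum_image (fun i _ j _ h => e_inj he (smul_right_injective V two_ne_zero h))]
  rw [← Finset.sum_add_distrib]
  congr 1
  refine Finset.sum_congr rfl fun p _ => ?_
  module

lemma card_first (a : Fin n) :
    (((univ : Finset (Fin n × Fin n)).filter (fun p => p.1 < p.2)).filter
      (fun p => p.1 = a)).card = n - 1 - (a:ℕ) := by
  have hset : ((univ : Finset (Fin n × Fin n)).filter (fun p => p.1 < p.2)).filter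
      (fun p => p.1 = a) = (Finset.Ioi a).image (fun j => (a, j)) := by
    ext p
    simp only [Finset.mem_filter, Finset.mem_univ, true_and, Finset.mem_image, Finset.mem_Ioi]
    constructor
    · rintro ⟨hlt, heq⟩
      exact ⟨p.2, heq ▸ hlt, Prod.ext heq.symm rfl⟩
    · rintro ⟨j, hj, rfl⟩
      exact ⟨hj, rfl⟩
  rw [hset, Finset.card_image_of_injective _ (fun x y h => by simpa using congrArg Prod.snd h)]
  exact Fin.card_Ioi a

lemma inner_Spos (hn : 2 ≤ n) (a : Fin n) :
    ⟪∑ δ ∈ PosC n e, δ, e a⟫ = 2*(n:ℝ) - 2*((a:ℕ):ℝ) := by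
  rw [Spos_eq he, inner_add_left, sum_inner, sum_inner]
  have h1 : ∀ p : Fin n × Fin n, ⟪(2:ℝ) • e p.1, e a⟫ = if p.1 = a then (2:ℝ) else 0 := by
    intro p; rw [real_inner_smul_left, ee he]; split_ifs <;> norm_num
  have h2 : ∀ i : Fin n, ⟪(2:ℝ) • e i, e a⟫ = if i = a then (2:ℝ) else 0 :=
    fun i => h1 (i, i)
  rw [Finset.sum_congr rfl fun p _ => h1 p, Finset.sum_congr rfl fun i _ => h2 i]
  rw [← Finset.sum_filter, Finset.sum_const, card_first he a, Finset.sum_ite_eq']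
  simp only [Finset.mem_univ, if_pos]
  have ha : (a:ℕ) ≤ n - 1 := by have := a.isLt; omega
  rw [nsmul_eq_mul]
  push_cast [Nat.cast_sub ha, Nat.cast_sub (by omega : 1 ≤ n)]
  ring

variable (hn : 2 ≤ n) (hC : TypeCData Φ Δ n e)
include hn hC

lemma two_rho_eq : (2:ℝ) • rho Φ Δ = ∑ δ ∈ PosC n e, δ := by
  rw [rho, Pos_eq he hn hC, smul_smul]
  norm_num

lemma cpr_rho_sub {i j : Fin n} (hij : i < j) :
    cpr ((2:ℝ) • rho Φ Δ) (e i - e j) = 2*((j:ℕ):ℝ) - 2*((i:ℕ):ℝ) := by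
  rw [two_rho_eq he hn hC, cpr, inner_sub_right, inner_Spos he hn, inner_Spos he hn,
    inner_sub_self_swap he (ne_of_lt hij)]
  ring

lemma cpr_rho_add {i j : Fin n} (hij : i < j) :
    cpr ((2:ℝ) • rho Φ Δ) (e i + e j) = 4*(n:ℝ) - 2*((i:ℕ):ℝ) - 2*((j:ℕ):ℝ) := by
  rw [two_rho_eq he hn hC, cpr, inner_add_right, inner_Spos he hn, inner_Spos he hn,
    inner_add_self_swap he (ne_of_lt hij)]
  ring

lemma cpr_rho_long (i : Fin n) :
    cpr ((2:ℝ) • rho Φ Δ) ((2:ℝ) • e i) = 2*(n:ℝ) - 2*((i:ℕ):ℝ) := by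
  rw [two_rho_eq he hn hC, cpr, real_inner_smul_right, inner_Spos he hn, inner_long_self he]
  ring

end GAux

section HAux
set_option linter.unusedSectionVars false
open Finset
variable {V : Type*} [NormedAddCommGroup V] [InnerProductSpace ℝ V]
variable {n : ℕ} {e : Fin n → V} {Φ Δ : Finset V}
variable (he : Orthonormal ℝ e)
include he

lemma count_sub {i j : Fin n} (hij : i < j) :
    2*((j:ℕ) - (i:ℕ)) - 1
      ≤ ((PosC n e).filter (fun δ => -(sref (e i - e j) δ) ∈ PosC n e)).card := by
  have hsw := fun a => sref_swap_e he (ne_of_lt hij) a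
  set T1 : Finset V := (Finset.Ioo i j).image (fun k => e i - e k) with hT1
  set T2 : Finset V := (Finset.Ioo i j).image (fun k => e k - e j) with hT2
  set T : Finset V := insert (e i - e j) (T1 ∪ T2) with hT
  have hinj1 : Function.Injective (fun k : Fin n => e i - e k) :=
    fun x y h => e_inj he (sub_right_injective h)
  have hinj2 : Function.Injective (fun k : Fin n => e k - e j) :=
    fun x y h => e_inj he (sub_left_injective h)
  have hsub : T ⊆ (PosC n e).filter (fun δ => -(sref (e i - e j) δ) ∈ PosC n e) := by
    intro v hv
    rw [hT, Finset.mem_insert, Finset.mem_union] at hv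
    rw [Finset.mem_filter]
    rcases hv with rfl | hv | hv
    · refine ⟨mem_P1' hij, ?_⟩
      rw [sref_sub, hsw i, hsw j, if_pos rfl, if_neg (Ne.symm (ne_of_lt hij)), if_pos rfl,
        neg_sub]
      exact mem_P1' hij
    · obtain ⟨k, hk, rfl⟩ := Finset.mem_image.mp hv
      rw [Finset.mem_Ioo] at hk
      refine ⟨mem_P1' hk.1, ?_⟩
      rw [sref_sub, hsw i, hsw k, if_pos rfl, if_neg (ne_of_gt hk.1), if_neg (ne_of_lt hk.2),
        neg_sub]
      exact mem_P1' hk.2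
    · obtain ⟨k, hk, rfl⟩ := Finset.mem_image.mp hv
      rw [Finset.mem_Ioo] at hk
      refine ⟨mem_P1' hk.2, ?_⟩
      rw [sref_sub, hsw k, hsw j, if_neg (ne_of_gt hk.1), if_neg (ne_of_lt hk.2),
        if_neg (Ne.symm (ne_of_lt hij)), if_pos rfl, neg_sub]
      exact mem_P1' hk.1
  have hd12 : Disjoint T1 T2 := by
    rw [Finset.disjoint_left]
    intro v hv1 hv2
    obtain ⟨k, hk, rfl⟩ := Finset.mem_image.mp hv1
    obtain ⟨k', hk', hv⟩ := Finset.mem_image.mp hv2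
    rw [Finset.mem_Ioo] at hk hk'
    have := congrArg (fun x => ⟪(x:V), e i⟫) hv.symm
    simp only [inner_sub_left, ee he, if_pos rfl] at this
    rw [if_neg (ne_of_gt hk.1), if_neg (ne_of_gt hk'.1),
      if_neg (Ne.symm (ne_of_lt (lt_trans hk'.1 hk'.2)))] at this
    norm_num at this
  have hnotmem : e i - e j ∉ T1 ∪ T2 := by
    rw [Finset.mem_union]
    rintro (hv | hv)
    · obtain ⟨k, hk, hv⟩ := Finset.mem_image.mp hv
      rw [Finset.mem_Ioo] at hk
      have : k = j := e_inj he (sub_right_injective hv)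
      rw [this] at hk
      exact absurd hk.2 (lt_irrefl j)
    · obtain ⟨k, hk, hv⟩ := Finset.mem_image.mp hv
      rw [Finset.mem_Ioo] at hk
      have : k = i := e_inj he (sub_left_injective hv)
      rw [this] at hk
      exact absurd hk.1 (lt_irrefl i)
  have hcard : T.card = 2*((j:ℕ) - (i:ℕ)) - 1 := by
    rw [hT, Finset.card_insert_of_notMem hnotmem, Finset.card_union_of_disjoint hd12,
      hT1, hT2, Finset.card_image_of_injective _ hinj1, Finset.card_image_of_injective _ hinj2,
      Fin.card_Ioo]
    have : (i:ℕ) < (j:ℕ) := hij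
    omega
  calc 2*((j:ℕ) - (i:ℕ)) - 1 = T.card := hcard.symm
    _ ≤ _ := Finset.card_le_card hsub

lemma count_long (i : Fin n) :
    2*(n - 1 - (i:ℕ)) + 1
      ≤ ((PosC n e).filter (fun δ => -(sref ((2:ℝ) • e i) δ) ∈ PosC n e)).card := by
  have hsl := fun a => sref_long he i a
  set T1 : Finset V := (Finset.Ioi i).image (fun j => e i - e j) with hT1
  set T2 : Finset V := (Finset.Ioi i).image (fun j => e i + e j) with hT2
  set T : Finset V := insert ((2:ℝ) • e i) (T1 ∪ T2) with hT
  have hinj1 : Function.Injective (fun k : Fin n => e i - e k) :=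
    fun x y h => e_inj he (sub_right_injective h)
  have hinj2 : Function.Injective (fun k : Fin n => e i + e k) :=
    fun x y h => e_inj he (add_left_cancel h)
  have hsub : T ⊆ (PosC n e).filter (fun δ => -(sref ((2:ℝ) • e i) δ) ∈ PosC n e) := by
    intro v hv
    rw [hT, Finset.mem_insert, Finset.mem_union] at hv
    rw [Finset.mem_filter]
    rcases hv with rfl | hv | hv
    · refine ⟨mem_P3' i, ?_⟩
      rw [sref_smul, hsl i, if_pos rfl, smul_neg, neg_neg]
      exact mem_P3' i
    · obtain ⟨k, hk, rfl⟩ := Finset.mem_image.mp hv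
      rw [Finset.mem_Ioi] at hk
      refine ⟨mem_P1' hk, ?_⟩
      rw [sref_sub, hsl i, hsl k, if_pos rfl, if_neg (ne_of_gt hk)]
      rw [show -(-e i - e k) = e i + e k by abel]
      exact mem_P2' (ne_of_lt hk)
    · obtain ⟨k, hk, rfl⟩ := Finset.mem_image.mp hv
      rw [Finset.mem_Ioi] at hk
      refine ⟨mem_P2' (ne_of_lt hk), ?_⟩
      rw [sref_add, hsl i, hsl k, if_pos rfl, if_neg (ne_of_gt hk)]
      rw [show -(-e i + e k) = e i - e k by abel]
      exact mem_P1' hk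
  have hd12 : Disjoint T1 T2 := by
    rw [Finset.disjoint_left]
    intro v hv1 hv2
    obtain ⟨k, hk, rfl⟩ := Finset.mem_image.mp hv1
    obtain ⟨k', hk', hv⟩ := Finset.mem_image.mp hv2
    rw [Finset.mem_Ioi] at hk hk'
    have h1 : ⟪e i - e k, ∑ t : Fin n, e t⟫ = ⟪e i + e k', ∑ t : Fin n, e t⟫ := by rw [hv]
    rw [inner_sub_left, inner_add_left, inner_w0 he, inner_w0 he, inner_w0 he] at h1
    norm_num at h1
  have hnotmem : (2:ℝ) • e i ∉ T1 ∪ T2 := by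
    rw [Finset.mem_union]
    rintro (hv | hv)
    · obtain ⟨k, hk, hv⟩ := Finset.mem_image.mp hv
      rw [Finset.mem_Ioi] at hk
      have h1 : ⟪e i - e k, e k⟫ = ⟪(2:ℝ) • e i, e k⟫ := by rw [hv]
      rw [inner_sub_left, real_inner_smul_left, ee he, ee he,
        if_neg (ne_of_lt hk), if_pos rfl] at h1
      norm_num at h1
    · obtain ⟨k, hk, hv⟩ := Finset.mem_image.mp hv
      rw [Finset.mem_Ioi] at hk
      have h1 : ⟪e i + e k, e k⟫ = ⟪(2:ℝ) • e i, e k⟫ := by rw [hv]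
      rw [inner_add_left, real_inner_smul_left, ee he, ee he,
        if_neg (ne_of_lt hk), if_pos rfl] at h1
      norm_num at h1
  have hcard : T.card = 2*(n - 1 - (i:ℕ)) + 1 := by
    rw [hT, Finset.card_insert_of_notMem hnotmem, Finset.card_union_of_disjoint hd12,
      hT1, hT2, Finset.card_image_of_injective _ hinj1, Finset.card_image_of_injective _ hinj2,
      Fin.card_Ioi]
    omega
  calc 2*(n - 1 - (i:ℕ)) + 1 = T.card := hcard.symm
    _ ≤ _ := Finset.card_le_card hsub

variable (hn : 2 ≤ n) (hRS : IsRS Φ Δ) (hC : TypeCData Φ Δ n e)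
include hn hRS hC

lemma len_sub {i j : Fin n} (hij : i < j) :
    len Δ (sref (e i - e j)) = 2*((j:ℕ) - (i:ℕ)) - 1 := by
  refine le_antisymm (len_le (word_P1 he hn hC hij)) ?_
  refine le_len (word_P1 he hn hC hij) fun m hm => ?_
  exact le_trans (count_sub he hij) (card_neg_le he hn hRS hC hm)

lemma len_long (i : Fin n) :
    len Δ (sref ((2:ℝ) • e i)) = 2*(n - 1 - (i:ℕ)) + 1 := by
  refine le_antisymm (len_le (word_P3 he hn hC i)) ?_
  refine le_len (word_P3 he hn hC i) fun m hm => ?_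
  exact le_trans (count_long he i) (card_neg_le he hn hRS hC hm)

end HAux
end Pp

open Pp in
/-- In type `C_n` (n ≥ 2) the quantum roots are exactly the long positive
roots (`⟪β,β⟫ = 4`, i.e. the roots `2e_i`) together with the short roots
`α_i + ⋯ + α_j = e_i - e_{j+1}` for `1 ≤ i ≤ j ≤ n-1`. -/
theorem stmt2 {V : Type*} [NormedAddCommGroup V] [InnerProductSpace ℝ V]
    (n : ℕ) (hn : 2 ≤ n) (e : Fin n → V) (Φ Δ : Finset V)
    (hRS : IsRS Φ Δ) (hC : TypeCData Φ Δ n e)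
    (β : V) (hβ : β ∈ Pos Φ Δ) :
    IsQuantum Φ Δ β ↔
      (⟪β, β⟫ = (4:ℝ) ∨
        ∃ i j : Fin n, (i : ℕ) ≤ (j : ℕ) ∧
          ∃ h : (j : ℕ) + 1 < n, β = e i - e ⟨(j : ℕ) + 1, h⟩) := by
  have he : Orthonormal ℝ e := hC.1
  have hβ' := hβ
  rw [Pos_eq he hn hC] at hβ'
  rcases (mem_PosC n e).mp hβ' with ⟨i, j, hij, rfl⟩ | ⟨i, j, hij, rfl⟩ | ⟨i, rfl⟩
  · -- `β = e i - e j` with `i < j` : quantum, and of the short form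
    have hijv : (i:ℕ) < (j:ℕ) := hij
    have hjlt := j.isLt
    have hQ : IsQuantum Φ Δ (e i - e j) := by
      rw [IsQuantum, len_sub he hn hRS hC hij, cpr_rho_sub he hn hC hij]
      have h1 : ((2*((j:ℕ) - (i:ℕ)) - 1 : ℕ) : ℝ) = 2*((j:ℕ):ℝ) - 2*((i:ℕ):ℝ) - 1 := by
        have : (((j:ℕ) - (i:ℕ) : ℕ) : ℝ) = ((j:ℕ):ℝ) - ((i:ℕ):ℝ) :=
          Nat.cast_sub (by omega)
        push_cast [Nat.cast_sub (by omega : 1 ≤ 2*((j:ℕ) - (i:ℕ))), this]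
        ring
      rw [h1]
    refine iff_of_true hQ (Or.inr ⟨i, ⟨(j:ℕ) - 1, by omega⟩,
      show (i:ℕ) ≤ (j:ℕ) - 1 by omega,
      show (j:ℕ) - 1 + 1 < n by omega, ?_⟩)
    exact congrArg (fun t => e i - e t) (Fin.ext (show (j:ℕ) = (j:ℕ) - 1 + 1 by omega))
  · -- `β = e i + e j` with `i < j` : not quantum, not of the given forms
    have hijv : (i:ℕ) < (j:ℕ) := hij
    have hjlt := j.isLt
    apply iff_of_false
    · rw [IsQuantum]
      intro hq
      set M : ℕ := 2*((j:ℕ) - (i:ℕ)) - 1 + 2*(n - 1 - (j:ℕ)) + 2 + 2*(n - 1 - (j:ℕ)) with hM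
      have hle : len Δ (sref (e i + e j)) ≤ M := len_le (word_P2 he hn hC hij)
      have hlef : ((len Δ (sref (e i + e j)) : ℕ) : ℝ) ≤ (M:ℝ) := Nat.cast_le.mpr hle
      rw [hq, cpr_rho_add he hn hC hij] at hlef
      have hMval : (M:ℝ) = 4*(n:ℝ) - 2*((i:ℕ):ℝ) - 2*((j:ℕ):ℝ) - 3 := by
        rw [hM]
        have e1 : ((2*((j:ℕ) - (i:ℕ)) - 1 : ℕ) : ℝ) = 2*((j:ℕ):ℝ) - 2*((i:ℕ):ℝ) - 1 := by
          push_cast [Nat.cast_sub (by omega : 1 ≤ 2*((j:ℕ) - (i:ℕ))),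
            Nat.cast_sub (by omega : (i:ℕ) ≤ (j:ℕ))]
          ring
        have e2 : ((n - 1 - (j:ℕ) : ℕ) : ℝ) = (n:ℝ) - 1 - ((j:ℕ):ℝ) := by
          push_cast [Nat.cast_sub (by omega : (j:ℕ) ≤ n - 1),
            Nat.cast_sub (by omega : 1 ≤ n)]
          ring
        push_cast [e1, e2]
        ring
      rw [hMval] at hlef
      have hn3 : (3:ℝ) ≤ (n:ℝ) + (n:ℝ) := by
        have : (2:ℝ) ≤ (n:ℝ) := by exact_mod_cast hn
        linarith
      linarith
    · rintro (h4 | ⟨a, b, hab, hb, heq⟩)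
      · rw [inner_add_self_swap he (ne_of_lt hij)] at h4
        norm_num at h4
      · have h1 : ⟪e i + e j, ∑ t : Fin n, e t⟫
            = ⟪e a - e ⟨(b:ℕ) + 1, hb⟩, ∑ t : Fin n, e t⟫ := by rw [← heq]
        rw [inner_add_left, inner_sub_left, inner_w0 he, inner_w0 he, inner_w0 he,
          inner_w0 he] at h1
        norm_num at h1
  · -- `β = 2 e i` : quantum and long
    have hilt := i.isLt
    have hQ : IsQuantum Φ Δ ((2:ℝ) • e i) := by
      rw [IsQuantum, len_long he hn hRS hC i, cpr_rho_long he hn hC i]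
      have h1 : ((2*(n - 1 - (i:ℕ)) + 1 : ℕ) : ℝ) = 2*(n:ℝ) - 2*((i:ℕ):ℝ) - 1 := by
        push_cast [Nat.cast_sub (by omega : (i:ℕ) ≤ n - 1),
          Nat.cast_sub (by omega : 1 ≤ n)]
        ring
      rw [h1]
    exact iff_of_true hQ (Or.inl (inner_long_self he i))
end
end

section
/- In the root system of type B_n (n ≥ 2), the set of quantum roots equals the union of the long positive roots with the single short simple root α_n. -/
/- A combinatorial framework for reduced crystallographic root systems with a
chosen system of simple roots, realized inside a real inner product space.
Weyl group elements are represented as plain functions `V → V` that are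
compositions of simple reflections; `len` is the Coxeter length. -/

noncomputable section
open Classical
open scoped RealInnerProductSpace

namespace QAux
open Pp
variable {V : Type*} [NormedAddCommGroup V] [InnerProductSpace ℝ V]

section Gen

lemma inner_self_ne (hα : α ≠ (0:V)) : ⟪α, α⟫ ≠ (0:ℝ) :=
  fun h => hα (inner_self_eq_zero.mp h)

lemma sref_apply (α x : V) : sref α x = x - (2 * ⟪x, α⟫ / ⟪α, α⟫) • α := rfl

lemma inner_sref_right (α x y : V) : ⟪x, sref α y⟫ = ⟪sref α x, y⟫ := by
  simp only [sref, cpr, inner_sub_left, inner_sub_right, real_inner_smul_left,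
    real_inner_smul_right]
  rw [real_inner_comm α y]
  ring

lemma inner_sref_sref (hα : α ≠ (0:V)) (x y : V) : ⟪sref α x, sref α y⟫ = ⟪x, y⟫ := by
  have hA := inner_self_ne hα
  simp only [sref, cpr, inner_sub_left, inner_sub_right, real_inner_smul_left,
    real_inner_smul_right]
  rw [real_inner_comm α y]
  field_simp
  ring

lemma sref_sref (hα : α ≠ (0:V)) (x : V) : sref α (sref α x) = x := by
  have hA := inner_self_ne hα
  simp only [sref, cpr, inner_sub_left, real_inner_smul_left]
  have h : 2 * (⟪x, α⟫ - 2 * ⟪x, α⟫ / ⟪α, α⟫ * ⟪α, α⟫) / ⟪α, α⟫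
      = -(2 * ⟪x, α⟫ / ⟪α, α⟫) := by field_simp; ring
  rw [h, neg_smul, sub_neg_eq_add, sub_add_cancel]

lemma sref_injective (hα : α ≠ (0:V)) : Function.Injective (sref α) :=
  Function.LeftInverse.injective (g := sref α) (sref_sref hα)

lemma sref_sub_smul (α x z : V) (c : ℝ) : sref α (x - c • z) = sref α x - c • sref α z := by
  simp only [sref, cpr, inner_sub_left, real_inner_smul_left, smul_sub, smul_smul]
  module

lemma sref_conj (hα : α ≠ (0:V)) (hβ : β ≠ (0:V)) :
    sref (sref α β) = sref α ∘ sref β ∘ sref α := by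
  funext x
  have h1 : sref α (sref β (sref α x)) = x - cpr (sref α x) β • sref α β := by
    have : sref β (sref α x) = sref α x - cpr (sref α x) β • β := rfl
    rw [this, sref_sub_smul, sref_sref hα]
  have h2 : cpr (sref α x) β = cpr x (sref α β) := by
    unfold cpr
    rw [← inner_sref_right, inner_sref_sref hα]
  simp only [Function.comp_apply, h1, h2]
  rfl

lemma foldr_comp_init (l : List (V → V)) (g : V → V) :
    l.foldr (· ∘ ·) g = l.foldr (· ∘ ·) id ∘ g := by
  induction l with
  | nil => rfl
  | cons a t ih => simp [List.foldr_cons, ih, Function.comp_assoc]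

lemma isWord_comp {Δ : Finset V} {w1 w2 : V → V} {m1 m2 : ℕ}
    (h1 : IsWord Δ w1 m1) (h2 : IsWord Δ w2 m2) : IsWord Δ (w1 ∘ w2) (m1 + m2) := by
  obtain ⟨l1, hl1, hm1, hw1⟩ := h1
  obtain ⟨l2, hl2, hm2, hw2⟩ := h2
  refine ⟨l1 ++ l2, by simp [hl1, hl2], ?_, ?_⟩
  · intro α hα; rcases List.mem_append.mp hα with h | h
    exacts [hm1 α h, hm2 α h]
  · rw [hw1, hw2, List.map_append, List.foldr_append]
    exact (foldr_comp_init _ _).symm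

lemma isWord_sref {Δ : Finset V} {α : V} (h : α ∈ Δ) : IsWord Δ (sref α) 1 :=
  ⟨[α], rfl, by simpa using h, by simp⟩

lemma isWord_id (Δ : Finset V) : IsWord Δ id 0 := ⟨[], rfl, by simp, by simp⟩

lemma len_le {Δ : Finset V} {w : V → V} {m : ℕ} (h : IsWord Δ w m) : len Δ w ≤ m :=
  Nat.sInf_le h

lemma word_injective {Δ : Finset V} (h0 : (0:V) ∉ Δ) :
    ∀ l : List V, (∀ α ∈ l, α ∈ Δ) → Function.Injective ((l.map sref).foldr (· ∘ ·) id) := by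
  intro l
  induction l with
  | nil => intro _; simp; exact fun _ _ h => h
  | cons a t ih =>
    intro hmem
    simp only [List.map_cons, List.foldr_cons]
    exact Function.Injective.comp
      (sref_injective (fun h => h0 (h ▸ hmem a (by simp))))
      (ih (fun α hα => hmem α (by simp [hα])))

end Gen

section RS
variable {Φ Δ : Finset V} (hRS : IsRS Φ Δ)
include hRS

lemma coeff_unique {c d : V → ℝ}
    (h : ∑ α ∈ Δ, c α • α = ∑ α ∈ Δ, d α • α) : ∀ α ∈ Δ, c α = d α := by
  have hz : ∑ α ∈ Δ, (c α - d α) • α = 0 := by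
    simp only [sub_smul, Finset.sum_sub_distrib, h, sub_self]
  have hz' : ∑ i : {x // x ∈ Δ}, (c i.1 - d i.1) • (i.1 : V) = 0 := by
    rw [Finset.sum_coe_sort Δ (fun a => (c a - d a) • a)]
    exact hz
  intro α hα
  have := (Fintype.linearIndependent_iff.mp hRS.simple_indep)
    (fun i => c i.1 - d i.1) hz' ⟨α, hα⟩
  linarith [this]

lemma sref_simple_pos {α β : V} (hα : α ∈ Δ) (hβ : β ∈ Pos Φ Δ) (hne : β ≠ α) :
    sref α β ∈ Pos Φ Δ := by
  have hαΦ : α ∈ Φ := hRS.simple_mem α hα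
  obtain ⟨hβΦ, c, hc, hcs⟩ := Finset.mem_filter.mp hβ
  have hγΦ : sref α β ∈ Φ := hRS.refl_mem α hαΦ β hβΦ
  rcases hRS.pos_or_neg _ hγΦ with h | h
  · exact h
  · exfalso
    obtain ⟨hnΦ, d, hd, hds⟩ := Finset.mem_filter.mp h
    -- β - sref α β = cpr β α • α, and β + (- sref α β) = ∑ (c+d) • α'
    have hsum : ∑ α' ∈ Δ, (c α' + d α') • α' = ∑ α' ∈ Δ, (if α' = α then cpr β α else 0) • α' := by
      have h1 : β + -sref α β = cpr β α • α := by
        simp [sref_apply, cpr, sub_eq_add_neg]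
      have h2 : β + -sref α β = ∑ α' ∈ Δ, (c α' + d α') • α' := by
        rw [hds]
        nth_rewrite 1 [hcs]
        rw [← Finset.sum_add_distrib]
        exact Finset.sum_congr rfl (fun a _ => (add_smul _ _ _).symm)
      rw [← h2, h1]
      have h3 : ∀ α' ∈ Δ, (if α' = α then cpr β α else 0) • α'
          = (if α' = α then cpr β α • α' else 0) := by
        intro a _; split_ifs <;> simp
      rw [Finset.sum_congr rfl h3, Finset.sum_ite_eq' Δ α (fun a => cpr β α • a)]
      simp [hα]
    have hkey := coeff_unique hRS hsum
    have hβα : β = c α • α := by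
      rw [hcs]
      apply Finset.sum_eq_single_of_mem α hα
      intro b hb hbne
      have := hkey b hb
      simp [hbne] at this
      have hcb : c b = 0 := by
        have := hd b hb
        have := hc b hb
        linarith
      simp [hcb]
    have := hRS.reduced α hαΦ (c α) (by rw [← hβα]; exact_mod_cast hβΦ)
    rcases this with h1 | h1
    · exact hne (by rw [hβα, h1, one_smul])
    · have := hc α hα; rw [h1] at this; linarith

lemma pos_word_card_le (h0 : (0:V) ∉ Δ) :
    ∀ l : List V, (∀ α ∈ l, α ∈ Δ) →
      ((Pos Φ Δ).filter
        (fun β => ((l.map sref).foldr (· ∘ ·) id) β ∉ Pos Φ Δ)).card ≤ l.length := by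
  intro l
  induction l with
  | nil =>
    intro _
    simp only [List.map_nil, List.foldr_nil, List.length_nil]
    rw [Finset.filter_false_of_mem (fun β hβ => by simp [hβ])]
    simp
  | cons a t ih =>
    intro hmem
    have ha : a ∈ Δ := hmem a (by simp)
    have ht : ∀ α ∈ t, α ∈ Δ := fun α hα => hmem α (by simp [hα])
    set w' := (t.map sref).foldr (· ∘ ·) id with hw'
    have hsub : (Pos Φ Δ).filter (fun β => ((((a :: t)).map sref).foldr (· ∘ ·) id) β ∉ Pos Φ Δ)
        ⊆ ((Pos Φ Δ).filter (fun β => w' β ∉ Pos Φ Δ)) ∪ ((Pos Φ Δ).filter (fun β => w' β = a)) := by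
      intro β hβ
      obtain ⟨hβP, hβn⟩ := Finset.mem_filter.mp hβ
      simp only [List.map_cons, List.foldr_cons, Function.comp_apply] at hβn
      rw [Finset.mem_union, Finset.mem_filter, Finset.mem_filter]
      by_cases hP : w' β ∈ Pos Φ Δ
      · right
        refine ⟨hβP, ?_⟩
        by_contra hne
        exact hβn (sref_simple_pos hRS ha hP hne)
      · left; exact ⟨hβP, hP⟩
    calc _ ≤ _ := Finset.card_le_card hsub
    _ ≤ ((Pos Φ Δ).filter (fun β => w' β ∉ Pos Φ Δ)).card
          + ((Pos Φ Δ).filter (fun β => w' β = a)).card := Finset.card_union_le _ _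
    _ ≤ t.length + 1 := by
        gcongr
        · exact ih ht
        · apply Finset.card_le_one.mpr
          intro x hx y hy
          obtain ⟨-, hx⟩ := Finset.mem_filter.mp hx
          obtain ⟨-, hy⟩ := Finset.mem_filter.mp hy
          exact word_injective h0 t ht (hx.trans hy.symm)
    _ = (a :: t).length := by simp

lemma card_inv_le_len (h0 : (0:V) ∉ Δ) {w : V → V} {m : ℕ} (hw : IsWord Δ w m) :
    ((Pos Φ Δ).filter (fun β => w β ∉ Pos Φ Δ)).card ≤ len Δ w := by
  have hne : {k | IsWord Δ w k}.Nonempty := ⟨m, hw⟩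
  have hlen : IsWord Δ w (len Δ w) := Nat.sInf_mem hne
  obtain ⟨l, hl, hmem, rfl⟩ := hlen
  calc _ ≤ l.length := pos_word_card_le hRS h0 l hmem
  _ = _ := hl

end RS
section Bn
variable {n : ℕ} {e : Fin n → V}

/-- The separating functional for positivity. -/
def uu (n : ℕ) (e : Fin n → V) : V := ∑ k : Fin n, ((n:ℝ) - (k:ℕ)) • e k

/-- The sum of all basis vectors. -/
def ss (n : ℕ) (e : Fin n → V) : V := ∑ k : Fin n, e k

variable (horth : Orthonormal ℝ e)
include horth

lemma inner_ee (i j : Fin n) : ⟪e i, e j⟫ = if i = j then (1:ℝ) else 0 :=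
  orthonormal_iff_ite.mp horth i j

lemma e_inj : Function.Injective e := horth.linearIndependent.injective

lemma e_ne_zero (i : Fin n) : e i ≠ 0 := horth.ne_zero i

lemma inner_u_e (m : Fin n) : ⟪uu n e, e m⟫ = (n:ℝ) - (m:ℕ) := by
  simp [uu, sum_inner, real_inner_smul_left, inner_ee horth, mul_ite,
    Finset.sum_ite_eq' Finset.univ m]

lemma inner_s_e (m : Fin n) : ⟪e m, ss n e⟫ = 1 := by
  simp [ss, inner_sum, inner_ee horth, Finset.sum_ite_eq Finset.univ m]

lemma inner_s_sub (a b : Fin n) : ⟪e a - e b, ss n e⟫ = 0 := by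
  simp [inner_sub_left, inner_s_e horth]

lemma inner_s_add (a b : Fin n) : ⟪e a + e b, ss n e⟫ = 2 := by
  simp [inner_add_left, inner_s_e horth]
  norm_num

lemma dec_sub_sub {a b c d : Fin n} (hab : a ≠ b) (hcd : c ≠ d)
    (h : e a - e b = e c - e d) : a = c ∧ b = d := by
  have hac : a = c := by
    by_contra hac
    have h1 : ⟪e a - e b, e c⟫ = ⟪e c - e d, e c⟫ := by rw [h]
    simp only [inner_sub_left, inner_ee horth] at h1
    simp only [if_neg hac, if_neg (Ne.symm hcd), if_pos rfl] at h1
    split_ifs at h1 <;> norm_num at h1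
  subst hac
  exact ⟨rfl, e_inj horth (sub_right_inj.mp h)⟩

lemma dec_add_add {a b c d : Fin n}
    (h : e a + e b = e c + e d) : (a = c ∧ b = d) ∨ (a = d ∧ b = c) := by
  by_cases hac : a = c
  · subst hac
    exact Or.inl ⟨rfl, e_inj horth (add_left_cancel h)⟩
  · right
    have had : a = d := by
      by_contra had
      have h1 : ⟪e a + e b, e a⟫ = ⟪e c + e d, e a⟫ := by rw [h]
      simp only [inner_add_left, inner_ee horth] at h1
      simp only [if_neg (Ne.symm hac), if_neg (Ne.symm had), if_pos rfl] at h1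
      split_ifs at h1 <;> norm_num at h1
    subst had
    refine ⟨rfl, ?_⟩
    have h2 : e a + e b = e a + e c := by rw [h]; abel
    exact e_inj horth (add_left_cancel h2)

lemma dec_sub_ne_add {a b : Fin n} (hab : a ≠ b) (c d : Fin n) :
    e a - e b ≠ e c + e d := by
  intro h
  have h1 : ⟪e a - e b, ss n e⟫ = ⟪e c + e d, ss n e⟫ := by rw [h]
  rw [inner_s_sub horth, inner_s_add horth] at h1
  norm_num at h1

lemma dec_sub_ne_e {a b : Fin n} (hab : a ≠ b) (c : Fin n) : e a - e b ≠ e c := by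
  intro h
  have h1 : ⟪e a - e b, ss n e⟫ = ⟪e c, ss n e⟫ := by rw [h]
  rw [inner_s_sub horth, inner_s_e horth] at h1
  norm_num at h1

lemma dec_add_ne_e (a b c : Fin n) : e a + e b ≠ e c := by
  intro h
  have h1 : ⟪e a + e b, ss n e⟫ = ⟪e c, ss n e⟫ := by rw [h]
  rw [inner_s_add horth, inner_s_e horth] at h1
  norm_num at h1

section PosPart
variable {Φ Δ : Finset V} (hRS : IsRS Φ Δ)
variable (hΦ : (Φ : Set V) =
    ({v | ∃ i j : Fin n, i ≠ j ∧ (v = e i - e j ∨ v = e i + e j ∨ v = -(e i + e j))} ∪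
     {v | ∃ i : Fin n, v = e i ∨ v = -(e i)}))
variable (hΔ : (Δ : Set V) =
    ({v | ∃ i : Fin n, ∃ h : (i : ℕ) + 1 < n, v = e i - e ⟨(i : ℕ) + 1, h⟩} ∪
     {v | ∃ h : 0 < n, v = e ⟨n - 1, by omega⟩}))

omit horth

section PhiOnly
include hΦ

lemma mem_Φ_iff (β : V) : β ∈ Φ ↔
    ((∃ i j : Fin n, i ≠ j ∧ (β = e i - e j ∨ β = e i + e j ∨ β = -(e i + e j))) ∨
     (∃ i : Fin n, β = e i ∨ β = -(e i))) := by
  rw [← Finset.mem_coe, hΦ]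
  simp [Set.mem_union, Set.mem_setOf_eq]

end PhiOnly

section DeltaOnly
include hΔ

lemma mem_Δ1 (i : Fin n) (h : (i:ℕ) + 1 < n) : e i - e ⟨(i:ℕ) + 1, h⟩ ∈ Δ := by
  rw [← Finset.mem_coe, hΔ]
  exact Or.inl ⟨i, h, rfl⟩

lemma mem_Δn (h0 : 0 < n) : e ⟨n - 1, by omega⟩ ∈ Δ := by
  rw [← Finset.mem_coe, hΔ]
  exact Or.inr ⟨h0, rfl⟩

lemma mem_Δ_elim {α : V} (hα : α ∈ Δ) :
    (∃ (i : Fin n) (h : (i:ℕ) + 1 < n), α = e i - e ⟨(i:ℕ) + 1, h⟩) ∨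
    (∃ h0 : 0 < n, α = e ⟨n - 1, by omega⟩) := by
  rw [← Finset.mem_coe, hΔ] at hα
  exact hα

end DeltaOnly

include horth

lemma uv_sub (i j : Fin n) : ⟪uu n e, e i - e j⟫ = ((j:ℕ):ℝ) - ((i:ℕ):ℝ) := by
  rw [inner_sub_right, inner_u_e horth, inner_u_e horth]; ring

lemma uv_add (i j : Fin n) : ⟪uu n e, e i + e j⟫ = 2*(n:ℝ) - ((i:ℕ):ℝ) - ((j:ℕ):ℝ) := by
  rw [inner_add_right, inner_u_e horth, inner_u_e horth]; ring

include hΔ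

lemma inner_u_simple {α : V} (hα : α ∈ Δ) : ⟪uu n e, α⟫ = 1 := by
  rcases mem_Δ_elim hΔ hα with ⟨i, h, rfl⟩ | ⟨h0, rfl⟩
  · rw [uv_sub horth]
    push_cast
    simp
  · rw [inner_u_e horth]
    have : ((⟨n - 1, by omega⟩ : Fin n) : ℕ) = n - 1 := rfl
    rw [this, Nat.cast_sub (by omega)]
    push_cast
    ring

include hRS

lemma pos_upos {β : V} (hβ : β ∈ Pos Φ Δ) : 0 < ⟪uu n e, β⟫ := by
  obtain ⟨hβΦ, c, hc, hcs⟩ := Finset.mem_filter.mp hβ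
  have hval : ⟪uu n e, β⟫ = ∑ α ∈ Δ, c α := by
    rw [hcs, inner_sum]
    refine Finset.sum_congr rfl fun α hα => ?_
    rw [real_inner_smul_right, inner_u_simple horth hΔ hα, mul_one]
  rw [hval]
  rcases (Finset.sum_nonneg fun α hα => hc α hα).lt_or_eq with h | h
  · exact h
  · exfalso
    have hcall : ∀ α ∈ Δ, c α = 0 :=
      (Finset.sum_eq_zero_iff_of_nonneg hc).mp h.symm
    have : β = 0 := by
      rw [hcs]
      exact Finset.sum_eq_zero fun α hα => by rw [hcall α hα, zero_smul]
    exact hRS.zero_not_mem (this ▸ hβΦ)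

lemma not_mem_Pos {β : V} (h : ⟪uu n e, β⟫ ≤ 0) : β ∉ Pos Φ Δ :=
  fun hb => absurd (pos_upos horth hRS hΔ hb) (not_lt.mpr h)

lemma mem_Pos_of {β : V} (hβΦ : β ∈ Φ) (h : 0 < ⟪uu n e, β⟫) : β ∈ Pos Φ Δ := by
  rcases hRS.pos_or_neg β hβΦ with hP | hP
  · exact hP
  · exfalso
    have := pos_upos horth hRS hΔ hP
    rw [inner_neg_right] at this
    linarith

include hΦ

lemma mem_Pos_iff (β : V) : β ∈ Pos Φ Δ ↔
    ((∃ i j : Fin n, i < j ∧ β = e i - e j) ∨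
     (∃ i j : Fin n, i ≠ j ∧ β = e i + e j) ∨
     (∃ i : Fin n, β = e i)) := by
  constructor
  · intro hβ
    have hu := pos_upos horth hRS hΔ hβ
    have hβΦ := (Finset.mem_filter.mp hβ).1
    rcases (mem_Φ_iff hΦ β).mp hβΦ with ⟨i, j, hij, hc | hc | hc⟩ | ⟨i, hc | hc⟩
    · subst hc
      rw [uv_sub horth] at hu
      refine Or.inl ⟨i, j, ?_, rfl⟩
      rw [Fin.lt_def]
      exact_mod_cast sub_pos.mp hu
    · exact Or.inr (Or.inl ⟨i, j, hij, hc⟩)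
    · exfalso
      subst hc
      rw [inner_neg_right, uv_add horth] at hu
      have hi := i.isLt
      have hj := j.isLt
      have hi' : ((i:ℕ):ℝ) < n := by exact_mod_cast hi
      have hj' : ((j:ℕ):ℝ) < n := by exact_mod_cast hj
      linarith
    · exact Or.inr (Or.inr ⟨i, hc⟩)
    · exfalso
      subst hc
      rw [inner_neg_right, inner_u_e horth] at hu
      have hi' : ((i:ℕ):ℝ) < n := by exact_mod_cast i.isLt
      linarith
  · intro h
    rcases h with ⟨i, j, hij, rfl⟩ | ⟨i, j, hij, rfl⟩ | ⟨i, rfl⟩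
    · refine mem_Pos_of horth hRS hΔ ?_ ?_
      · exact (mem_Φ_iff hΦ _).mpr (Or.inl ⟨i, j, ne_of_lt hij, Or.inl rfl⟩)
      · rw [uv_sub horth]
        have : (i:ℕ) < (j:ℕ) := hij
        have : ((i:ℕ):ℝ) < ((j:ℕ):ℝ) := by exact_mod_cast this
        linarith
    · refine mem_Pos_of horth hRS hΔ ?_ ?_
      · exact (mem_Φ_iff hΦ _).mpr (Or.inl ⟨i, j, hij, Or.inr (Or.inl rfl)⟩)
      · rw [uv_add horth]
        have hi' : ((i:ℕ):ℝ) < n := by exact_mod_cast i.isLt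
        have hj' : ((j:ℕ):ℝ) < n := by exact_mod_cast j.isLt
        linarith
    · refine mem_Pos_of horth hRS hΔ ?_ ?_
      · exact (mem_Φ_iff hΦ _).mpr (Or.inr ⟨i, Or.inl rfl⟩)
      · rw [inner_u_e horth]
        have hi' : ((i:ℕ):ℝ) < n := by exact_mod_cast i.isLt
        linarith

end PosPart

section SumPart
variable {Φ Δ : Finset V} (hRS : IsRS Φ Δ)
variable (hΦ : (Φ : Set V) =
    ({v | ∃ i j : Fin n, i ≠ j ∧ (v = e i - e j ∨ v = e i + e j ∨ v = -(e i + e j))} ∪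
     {v | ∃ i : Fin n, v = e i ∨ v = -(e i)}))
variable (hΔ : (Δ : Set V) =
    ({v | ∃ i : Fin n, ∃ h : (i : ℕ) + 1 < n, v = e i - e ⟨(i : ℕ) + 1, h⟩} ∪
     {v | ∃ h : 0 < n, v = e ⟨n - 1, by omega⟩}))

lemma nrm_sub {i j : Fin n} (hij : i ≠ j) : ⟪e i - e j, e i - e j⟫ = (2:ℝ) := by
  simp only [inner_sub_left, inner_sub_right, inner_ee horth, hij, hij.symm, ↓reduceIte]
  norm_num

lemma nrm_add {i j : Fin n} (hij : i ≠ j) : ⟪e i + e j, e i + e j⟫ = (2:ℝ) := by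
  simp only [inner_add_left, inner_add_right, inner_ee horth, hij, hij.symm, ↓reduceIte]
  norm_num

lemma nrm_e (i : Fin n) : ⟪e i, e i⟫ = (1:ℝ) := by simp only [inner_ee horth, ↓reduceIte]

omit horth in
lemma cardA (m : Fin n) :
    ((Finset.univ.filter fun p : Fin n × Fin n => p.1 < p.2).filter fun p => p.1 = m).card
      = n - 1 - (m:ℕ) := by
  rw [Finset.filter_filter]
  have h : (Finset.univ.filter fun p : Fin n × Fin n => p.1 < p.2 ∧ p.1 = m)
      = {m} ×ˢ Finset.Ioi m := by
    ext p
    simp only [Finset.mem_filter, Finset.mem_univ, true_and, Finset.mem_product,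
      Finset.mem_singleton, Finset.mem_Ioi]
    constructor
    · rintro ⟨h1, h2⟩; exact ⟨h2, h2 ▸ h1⟩
    · rintro ⟨h1, h2⟩; exact ⟨h1 ▸ h2, h1⟩
  rw [h, Finset.card_product, Finset.card_singleton, one_mul, Fin.card_Ioi]

omit horth in
lemma cardB (m : Fin n) :
    ((Finset.univ.filter fun p : Fin n × Fin n => p.1 < p.2).filter fun p => p.2 = m).card
      = (m:ℕ) := by
  rw [Finset.filter_filter]
  have h : (Finset.univ.filter fun p : Fin n × Fin n => p.1 < p.2 ∧ p.2 = m)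
      = Finset.Iio m ×ˢ {m} := by
    ext p
    simp only [Finset.mem_filter, Finset.mem_univ, true_and, Finset.mem_product,
      Finset.mem_singleton, Finset.mem_Iio]
    constructor
    · rintro ⟨h1, h2⟩; exact ⟨h2 ▸ h1, h2⟩
    · rintro ⟨h1, h2⟩; exact ⟨h2 ▸ h1, h2⟩
  rw [h, Finset.card_product, Finset.card_singleton, mul_one, Fin.card_Iio]

include hRS hΦ hΔ

lemma Pos_eq : Pos Φ Δ =
    (((Finset.univ : Finset (Fin n × Fin n)).filter fun p => p.1 < p.2).image
        fun p => e p.1 - e p.2)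
    ∪ (((Finset.univ : Finset (Fin n × Fin n)).filter fun p => p.1 < p.2).image
        fun p => e p.1 + e p.2)
    ∪ (Finset.univ.image e) := by
  ext β
  rw [mem_Pos_iff horth hRS hΦ hΔ]
  simp only [Finset.mem_union, Finset.mem_image, Finset.mem_filter, Finset.mem_univ, true_and]
  constructor
  · rintro (⟨i, j, hij, rfl⟩ | ⟨i, j, hij, rfl⟩ | ⟨i, rfl⟩)
    · exact Or.inl (Or.inl ⟨(i, j), hij, rfl⟩)
    · rcases hij.lt_or_gt with h | h
      · exact Or.inl (Or.inr ⟨(i, j), h, rfl⟩)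
      · exact Or.inl (Or.inr ⟨(j, i), h, add_comm (e j) (e i)⟩)
    · exact Or.inr ⟨i, rfl⟩
  · rintro ((⟨p, hp, rfl⟩ | ⟨p, hp, rfl⟩) | ⟨i, rfl⟩)
    · exact Or.inl ⟨p.1, p.2, hp, rfl⟩
    · exact Or.inr (Or.inl ⟨p.1, p.2, ne_of_lt hp, rfl⟩)
    · exact Or.inr (Or.inr ⟨i, rfl⟩)

lemma inner_sumPos_e (m : Fin n) :
    ⟪∑ γ ∈ Pos Φ Δ, γ, e m⟫ = 2*(n:ℝ) - 2*((m:ℕ):ℝ) - 1 := by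
  have hm : (m:ℕ) < n := m.isLt
  rw [Pos_eq horth hRS hΦ hΔ]
  set F := ((Finset.univ : Finset (Fin n × Fin n)).filter fun p => p.1 < p.2) with hF
  have hd0 : Disjoint (F.image fun p => e p.1 - e p.2) (F.image fun p => e p.1 + e p.2) := by
    rw [Finset.disjoint_left]
    rintro v hv1 hv2
    obtain ⟨p, hp, rfl⟩ := Finset.mem_image.mp hv1
    obtain ⟨q, hq, hh⟩ := Finset.mem_image.mp hv2
    exact dec_sub_ne_add horth (ne_of_lt (Finset.mem_filter.mp hp).2) q.1 q.2 hh.symm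
  have hd1 : Disjoint ((F.image fun p => e p.1 - e p.2) ∪ (F.image fun p => e p.1 + e p.2))
      (Finset.univ.image e) := by
    rw [Finset.disjoint_left]
    rintro v hv1 hv2
    obtain ⟨i, _, rfl⟩ := Finset.mem_image.mp hv2
    rcases Finset.mem_union.mp hv1 with h | h
    · obtain ⟨p, hp, hh⟩ := Finset.mem_image.mp h
      exact dec_sub_ne_e horth (ne_of_lt (Finset.mem_filter.mp hp).2) i hh
    · obtain ⟨p, hp, hh⟩ := Finset.mem_image.mp h
      exact dec_add_ne_e horth p.1 p.2 i hh
  rw [Finset.sum_union hd1, Finset.sum_union hd0]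
  have hinj1 : ∀ p ∈ F, ∀ q ∈ F, e p.1 - e p.2 = e q.1 - e q.2 → p = q := by
    intro p hp q hq h
    have := dec_sub_sub horth (ne_of_lt (Finset.mem_filter.mp hp).2)
      (ne_of_lt (Finset.mem_filter.mp hq).2) h
    exact Prod.ext this.1 this.2
  have hinj2 : ∀ p ∈ F, ∀ q ∈ F, e p.1 + e p.2 = e q.1 + e q.2 → p = q := by
    intro p hp q hq h
    rcases dec_add_add horth h with ⟨h1, h2⟩ | ⟨h1, h2⟩
    · exact Prod.ext h1 h2
    · exfalso
      have hp' := (Finset.mem_filter.mp hp).2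
      have hq' := (Finset.mem_filter.mp hq).2
      rw [h1, h2] at hp'
      exact absurd hq' (not_lt.mpr (le_of_lt hp'))
  rw [Finset.sum_image hinj1, Finset.sum_image hinj2,
    Finset.sum_image (fun i _ j _ h => e_inj horth h)]
  rw [inner_add_left, inner_add_left, sum_inner, sum_inner, sum_inner]
  simp only [inner_sub_left, inner_ee horth]
  rw [Finset.sum_sub_distrib, Finset.sum_boole, Finset.sum_boole]
  have h3 : ∀ p ∈ F, (⟪e (p:Fin n × Fin n).1 + e p.2, e m⟫ : ℝ)
      = (if p.1 = m then (1:ℝ) else 0) + (if p.2 = m then (1:ℝ) else 0) := by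
    intro p _; rw [inner_add_left, inner_ee horth, inner_ee horth]
  rw [Finset.sum_congr rfl h3, Finset.sum_add_distrib, Finset.sum_boole, Finset.sum_boole]
  rw [cardA, cardB]
  rw [Finset.sum_ite_eq' Finset.univ m (fun _ => (1:ℝ))]
  simp only [Finset.mem_univ, if_true]
  have hc : ((n - 1 - (m:ℕ) : ℕ) : ℝ) = (n:ℝ) - 1 - ((m:ℕ):ℝ) := by
    rw [Nat.cast_sub (by omega), Nat.cast_sub (by omega)]
    push_cast; ring
  rw [hc]
  ring

lemma two_rho_eq : (2:ℝ) • rho Φ Δ = ∑ γ ∈ Pos Φ Δ, γ := by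
  rw [rho, smul_smul]
  norm_num

end SumPart

section WordsPart
variable {Φ Δ : Finset V}
variable (hΔ : (Δ : Set V) =
    ({v | ∃ i : Fin n, ∃ h : (i : ℕ) + 1 < n, v = e i - e ⟨(i : ℕ) + 1, h⟩} ∪
     {v | ∃ h : 0 < n, v = e ⟨n - 1, by omega⟩}))

lemma e_sub_ne_zero {i j : Fin n} (hij : i ≠ j) : e i - e j ≠ 0 :=
  sub_ne_zero.mpr (fun h => hij (e_inj horth h))

lemma sref_sub_snd {i j : Fin n} (hij : i ≠ j) : sref (e i - e j) (e j) = e i := by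
  rw [sref_apply]
  have h1 : ⟪e j, e i - e j⟫ = (-1:ℝ) := by
    rw [inner_sub_right, inner_ee horth, inner_ee horth]
    simp [Ne.symm hij]
  rw [h1, nrm_sub horth hij]
  have h2 : (2 * (-1:ℝ) / 2) = -1 := by norm_num
  rw [h2]
  module

lemma sref_sub_mid {a b c : Fin n} (hab : a ≠ b) (hac : a ≠ c) (hbc : b ≠ c) :
    sref (e a - e b) (e b - e c) = e a - e c := by
  rw [sref_apply]
  have h1 : ⟪e b - e c, e a - e b⟫ = (-1:ℝ) := by
    simp only [inner_sub_left, inner_sub_right, inner_ee horth]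
    simp [Ne.symm hab, hbc, Ne.symm hbc, hac, Ne.symm hac]
  rw [h1, nrm_sub horth hab]
  have h2 : (2 * (-1:ℝ) / 2) = -1 := by norm_num
  rw [h2]
  module

lemma sref_e_sub {i j : Fin n} (hij : i ≠ j) : sref (e j) (e i - e j) = e i + e j := by
  rw [sref_apply]
  have h1 : ⟪e i - e j, e j⟫ = (-1:ℝ) := by
    simp only [inner_sub_left, inner_ee horth]
    simp [hij]
  rw [h1, nrm_e horth]
  have h2 : (2 * (-1:ℝ) / 1) = -2 := by norm_num
  rw [h2]
  module

include hΔ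

lemma word_short : ∀ k : ℕ, ∀ i : Fin n, n - 1 - (i:ℕ) = k → IsWord Δ (sref (e i)) (2*k+1) := by
  intro k
  induction k with
  | zero =>
    intro i hi
    have h0 : 0 < n := i.pos
    have : i = ⟨n - 1, by omega⟩ := Fin.ext (by have := i.isLt; simp; omega)
    rw [this]
    exact isWord_sref (mem_Δn hΔ h0)
  | succ k ih =>
    intro i hi
    have hlt : (i:ℕ) + 1 < n := by have := i.isLt; omega
    set i' : Fin n := ⟨(i:ℕ) + 1, hlt⟩ with hi'
    have hne : i ≠ i' := Fin.ne_of_val_ne (by simp [hi'])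
    have hword' := ih i' (by simp [hi']; omega)
    have hconj := sref_conj (e_sub_ne_zero horth hne) (e_ne_zero horth i')
    rw [sref_sub_snd horth hne] at hconj
    rw [hconj]
    have htot := isWord_comp (isWord_sref (mem_Δ1 hΔ i hlt))
      (isWord_comp hword' (isWord_sref (mem_Δ1 hΔ i hlt)))
    have harith : 1 + (2*k+1 + 1) = 2*(k+1)+1 := by ring
    rwa [harith] at htot

lemma word_sub : ∀ k : ℕ, ∀ i j : Fin n, i < j → (j:ℕ) - (i:ℕ) = k + 1 →
    IsWord Δ (sref (e i - e j)) (2*k+1) := by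
  intro k
  induction k with
  | zero =>
    intro i j hij hd
    have hlt : (i:ℕ) + 1 < n := by have := j.isLt; have : (i:ℕ) < (j:ℕ) := hij; omega
    have : j = ⟨(i:ℕ) + 1, hlt⟩ := Fin.ext (by have : (i:ℕ) < (j:ℕ) := hij; simp; omega)
    rw [this]
    exact isWord_sref (mem_Δ1 hΔ i hlt)
  | succ k ih =>
    intro i j hij hd
    have hij' : (i:ℕ) < (j:ℕ) := hij
    have hlt : (i:ℕ) + 1 < n := by have := j.isLt; omega
    set i' : Fin n := ⟨(i:ℕ) + 1, hlt⟩ with hi'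
    have hne : i ≠ i' := Fin.ne_of_val_ne (by simp [hi'])
    have hij2 : i' < j := by rw [Fin.lt_def]; simp [hi']; omega
    have hne2 : i' ≠ j := ne_of_lt hij2
    have hnij : i ≠ j := ne_of_lt hij
    have hword' := ih i' j hij2 (by simp [hi']; omega)
    have hconj := sref_conj (e_sub_ne_zero horth hne) (e_sub_ne_zero horth hne2)
    rw [sref_sub_mid horth hne hnij hne2] at hconj
    rw [hconj]
    have htot := isWord_comp (isWord_sref (mem_Δ1 hΔ i hlt))
      (isWord_comp hword' (isWord_sref (mem_Δ1 hΔ i hlt)))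
    have harith : 1 + (2*k+1 + 1) = 2*(k+1)+1 := by ring
    rwa [harith] at htot

lemma word_plus (i j : Fin n) (hij : i < j) :
    IsWord Δ (sref (e i + e j))
      ((2*(n-1-(j:ℕ))+1) + ((2*((j:ℕ)-(i:ℕ)-1)+1) + (2*(n-1-(j:ℕ))+1))) := by
  have hnij : i ≠ j := ne_of_lt hij
  have h1 := word_short horth hΔ (n-1-(j:ℕ)) j rfl
  have h2 := word_sub horth hΔ ((j:ℕ)-(i:ℕ)-1) i j hij (by have : (i:ℕ) < (j:ℕ) := hij; omega)
  have hconj := sref_conj (e_ne_zero horth j) (e_sub_ne_zero horth hnij)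
  rw [sref_e_sub horth hnij] at hconj
  rw [hconj]
  exact isWord_comp h1 (isWord_comp h2 h1)

end WordsPart

section InvPart
variable {Φ Δ : Finset V} (hRS : IsRS Φ Δ)
variable (hΦ : (Φ : Set V) =
    ({v | ∃ i j : Fin n, i ≠ j ∧ (v = e i - e j ∨ v = e i + e j ∨ v = -(e i + e j))} ∪
     {v | ∃ i : Fin n, v = e i ∨ v = -(e i)}))
variable (hΔ : (Δ : Set V) =
    ({v | ∃ i : Fin n, ∃ h : (i : ℕ) + 1 < n, v = e i - e ⟨(i : ℕ) + 1, h⟩} ∪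
     {v | ∃ h : 0 < n, v = e ⟨n - 1, by omega⟩}))

lemma sref_val {β v : V} (hβ2 : ⟪β,β⟫ = (2:ℝ)) (hvb : ⟪v,β⟫ = (1:ℝ)) :
    sref β v = v - β := by
  rw [sref_apply, hvb, hβ2]
  have h : (2 * (1:ℝ) / 2) = 1 := by norm_num
  rw [h, one_smul]

lemma sref_self {β : V} (hβ : β ≠ 0) : sref β β = -β := by
  rw [sref_apply]
  have h : 2 * ⟪β,β⟫ / ⟪β,β⟫ = 2 := by
    have hA := inner_self_ne hβ
    field_simp
  rw [h]
  module

include hRS hΦ hΔ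

lemma inv_sub (i j : Fin n) (hij : i < j) :
    2*((j:ℕ)-(i:ℕ))-1 ≤ ((Pos Φ Δ).filter (fun v => sref (e i - e j) v ∉ Pos Φ Δ)).card := by
  have hnij : i ≠ j := ne_of_lt hij
  have hij' : (i:ℕ) < (j:ℕ) := hij
  have hβ0 : e i - e j ≠ 0 := e_sub_ne_zero horth hnij
  have hβ2 := nrm_sub horth hnij
  set S1 := (Finset.Ioc i j).image (fun k => e i - e k) with hS1
  set S2 := (Finset.Ico i j).image (fun k => e k - e j) with hS2
  have hsub : S1 ∪ S2 ⊆ (Pos Φ Δ).filter (fun v => sref (e i - e j) v ∉ Pos Φ Δ) := by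
    intro v hv
    rw [Finset.mem_filter]
    rcases Finset.mem_union.mp hv with hv | hv
    · obtain ⟨k, hk, rfl⟩ := Finset.mem_image.mp hv
      rw [Finset.mem_Ioc] at hk
      have hik : i ≠ k := ne_of_lt hk.1
      refine ⟨(mem_Pos_iff horth hRS hΦ hΔ _).mpr (Or.inl ⟨i, k, hk.1, rfl⟩), ?_⟩
      by_cases hkj : k = j
      · subst hkj
        rw [sref_self horth hβ0]
        apply not_mem_Pos horth hRS hΔ
        rw [inner_neg_right, uv_sub horth]
        have : ((i:ℕ):ℝ) < ((k:ℕ):ℝ) := by exact_mod_cast hij'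
        linarith
      · have hval : ⟪e i - e k, e i - e j⟫ = (1:ℝ) := by
          simp only [inner_sub_left, inner_sub_right, inner_ee horth]
          simp [hnij, hik.symm, hkj]
        rw [sref_val horth hβ2 hval]
        apply not_mem_Pos horth hRS hΔ
        have hw : e i - e k - (e i - e j) = e j - e k := by module
        rw [hw, uv_sub horth]
        have : ((k:ℕ):ℝ) ≤ ((j:ℕ):ℝ) := by exact_mod_cast hk.2
        linarith
    · obtain ⟨k, hk, rfl⟩ := Finset.mem_image.mp hv
      rw [Finset.mem_Ico] at hk
      have hkj : k ≠ j := ne_of_lt hk.2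
      refine ⟨(mem_Pos_iff horth hRS hΦ hΔ _).mpr (Or.inl ⟨k, j, hk.2, rfl⟩), ?_⟩
      by_cases hki : k = i
      · subst hki
        rw [sref_self horth hβ0]
        apply not_mem_Pos horth hRS hΔ
        rw [inner_neg_right, uv_sub horth]
        have : ((k:ℕ):ℝ) < ((j:ℕ):ℝ) := by exact_mod_cast hij'
        linarith
      · have hval : ⟪e k - e j, e i - e j⟫ = (1:ℝ) := by
          simp only [inner_sub_left, inner_sub_right, inner_ee horth]
          simp [hki, hnij.symm, hkj]
        rw [sref_val horth hβ2 hval]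
        apply not_mem_Pos horth hRS hΔ
        have hw : e k - e j - (e i - e j) = e k - e i := by module
        rw [hw, uv_sub horth]
        have : ((i:ℕ):ℝ) ≤ ((k:ℕ):ℝ) := by exact_mod_cast hk.1
        linarith
  have hc1 : S1.card = (j:ℕ) - (i:ℕ) := by
    rw [hS1, Finset.card_image_of_injOn, Fin.card_Ioc]
    intro a _ b _ hab
    exact e_inj horth (sub_right_inj.mp hab)
  have hc2 : S2.card = (j:ℕ) - (i:ℕ) := by
    rw [hS2, Finset.card_image_of_injOn, Fin.card_Ico]
    intro a _ b _ hab
    exact e_inj horth (sub_left_inj.mp hab)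
  have hinter : (S1 ∩ S2).card ≤ 1 := by
    refine le_trans (Finset.card_le_card ?_) (Finset.card_singleton (e i - e j)).le
    intro v hv
    obtain ⟨hv1, hv2⟩ := Finset.mem_inter.mp hv
    obtain ⟨k, hk, rfl⟩ := Finset.mem_image.mp hv1
    obtain ⟨k', hk', hkk⟩ := Finset.mem_image.mp hv2
    rw [Finset.mem_Ioc] at hk
    rw [Finset.mem_Ico] at hk'
    obtain ⟨h1, h2⟩ := dec_sub_sub horth (ne_of_lt hk'.2) (ne_of_lt hk.1) hkk
    rw [Finset.mem_singleton, ← h1, h2]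
  have huni := Finset.card_union_add_card_inter S1 S2
  have hcard := Finset.card_le_card hsub
  omega

omit hRS hΦ hΔ in
lemma e_add_ne_zero {i j : Fin n} (hij : i ≠ j) : e i + e j ≠ 0 := by
  intro h
  have := nrm_add horth hij
  rw [h] at this
  simp at this

lemma inv_add (i j : Fin n) (hij : i < j) :
    4*n - 2*(i:ℕ) - 2*(j:ℕ) - 3 ≤
      ((Pos Φ Δ).filter (fun v => sref (e i + e j) v ∉ Pos Φ Δ)).card := by
  have hnij : i ≠ j := ne_of_lt hij
  have hij' : (i:ℕ) < (j:ℕ) := hij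
  have hjn : (j:ℕ) < n := j.isLt
  have hβ0 : e i + e j ≠ 0 := e_add_ne_zero horth hnij
  have hβ2 := nrm_add horth hnij
  have hiR : ((i:ℕ):ℝ) < ((j:ℕ):ℝ) := by exact_mod_cast hij'
  have hjR : ((j:ℕ):ℝ) < (n:ℝ) := by exact_mod_cast hjn
  set S0 : Finset V := {e i, e j, e i + e j} with hS0
  set S2 := ((Finset.Ioi i).erase j).image (fun k => e i - e k) with hS2
  set S3 := (Finset.Ioi j).image (fun k => e i + e k) with hS3
  set S4 := (Finset.Ioi j).image (fun k => e j - e k) with hS4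
  set S5 := ((Finset.Ioi i).erase j).image (fun k => e j + e k) with hS5
  have hsub : S0 ∪ (S2 ∪ (S3 ∪ (S4 ∪ S5))) ⊆
      (Pos Φ Δ).filter (fun v => sref (e i + e j) v ∉ Pos Φ Δ) := by
    intro v hv
    rw [Finset.mem_filter]
    rcases Finset.mem_union.mp hv with hv | hv
    · -- S0
      rcases Finset.mem_insert.mp hv with rfl | hv
      · refine ⟨(mem_Pos_iff horth hRS hΦ hΔ _).mpr (Or.inr (Or.inr ⟨i, rfl⟩)), ?_⟩
        have hval : ⟪e i, e i + e j⟫ = (1:ℝ) := by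
          simp only [inner_add_right, inner_ee horth]
          simp [hnij]
        rw [sref_val horth hβ2 hval]
        apply not_mem_Pos horth hRS hΔ
        have hw : e i - (e i + e j) = -(e j) := by module
        rw [hw, inner_neg_right, inner_u_e horth]
        linarith
      rcases Finset.mem_insert.mp hv with rfl | hv
      · refine ⟨(mem_Pos_iff horth hRS hΦ hΔ _).mpr (Or.inr (Or.inr ⟨j, rfl⟩)), ?_⟩
        have hval : ⟪e j, e i + e j⟫ = (1:ℝ) := by
          simp only [inner_add_right, inner_ee horth]
          simp [Ne.symm hnij]
        rw [sref_val horth hβ2 hval]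
        apply not_mem_Pos horth hRS hΔ
        have hw : e j - (e i + e j) = -(e i) := by module
        rw [hw, inner_neg_right, inner_u_e horth]
        linarith
      · rw [Finset.mem_singleton] at hv
        subst hv
        refine ⟨(mem_Pos_iff horth hRS hΦ hΔ _).mpr (Or.inr (Or.inl ⟨i, j, hnij, rfl⟩)), ?_⟩
        rw [sref_self horth hβ0]
        apply not_mem_Pos horth hRS hΔ
        rw [inner_neg_right, uv_add horth]
        linarith
    rcases Finset.mem_union.mp hv with hv | hv
    · -- S2
      obtain ⟨k, hk, rfl⟩ := Finset.mem_image.mp hv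
      obtain ⟨hkj, hk⟩ := Finset.mem_erase.mp hk
      rw [Finset.mem_Ioi] at hk
      have hik : i ≠ k := ne_of_lt hk
      have hkR : ((k:ℕ):ℝ) < (n:ℝ) := by exact_mod_cast k.isLt
      refine ⟨(mem_Pos_iff horth hRS hΦ hΔ _).mpr (Or.inl ⟨i, k, hk, rfl⟩), ?_⟩
      have hval : ⟪e i - e k, e i + e j⟫ = (1:ℝ) := by
        simp only [inner_sub_left, inner_add_right, inner_ee horth]
        simp [hnij, hik.symm, hkj]
      rw [sref_val horth hβ2 hval]
      apply not_mem_Pos horth hRS hΔ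
      have hw : e i - e k - (e i + e j) = -(e j + e k) := by module
      rw [hw, inner_neg_right, uv_add horth]
      linarith
    rcases Finset.mem_union.mp hv with hv | hv
    · -- S3
      obtain ⟨k, hk, rfl⟩ := Finset.mem_image.mp hv
      rw [Finset.mem_Ioi] at hk
      have hjk : j ≠ k := ne_of_lt hk
      have hik : i ≠ k := ne_of_lt (hij.trans hk)
      have hkR : ((j:ℕ):ℝ) < ((k:ℕ):ℝ) := by exact_mod_cast hk
      refine ⟨(mem_Pos_iff horth hRS hΦ hΔ _).mpr (Or.inr (Or.inl ⟨i, k, hik, rfl⟩)), ?_⟩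
      have hval : ⟪e i + e k, e i + e j⟫ = (1:ℝ) := by
        simp only [inner_add_left, inner_add_right, inner_ee horth]
        simp [hnij, hik.symm, hjk.symm]
      rw [sref_val horth hβ2 hval]
      apply not_mem_Pos horth hRS hΔ
      have hw : e i + e k - (e i + e j) = e k - e j := by module
      rw [hw, uv_sub horth]
      linarith
    rcases Finset.mem_union.mp hv with hv | hv
    · -- S4
      obtain ⟨k, hk, rfl⟩ := Finset.mem_image.mp hv
      rw [Finset.mem_Ioi] at hk
      have hjk : j ≠ k := ne_of_lt hk
      have hik : i ≠ k := ne_of_lt (hij.trans hk)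
      have hkR : ((k:ℕ):ℝ) < (n:ℝ) := by exact_mod_cast k.isLt
      refine ⟨(mem_Pos_iff horth hRS hΦ hΔ _).mpr (Or.inl ⟨j, k, hk, rfl⟩), ?_⟩
      have hval : ⟪e j - e k, e i + e j⟫ = (1:ℝ) := by
        simp only [inner_sub_left, inner_add_right, inner_ee horth]
        simp [Ne.symm hnij, hik.symm, hjk.symm]
      rw [sref_val horth hβ2 hval]
      apply not_mem_Pos horth hRS hΔ
      have hw : e j - e k - (e i + e j) = -(e i + e k) := by module
      rw [hw, inner_neg_right, uv_add horth]
      have hiR' : ((i:ℕ):ℝ) < (n:ℝ) := by exact_mod_cast i.isLt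
      linarith
    · -- S5
      obtain ⟨k, hk, rfl⟩ := Finset.mem_image.mp hv
      obtain ⟨hkj, hk⟩ := Finset.mem_erase.mp hk
      rw [Finset.mem_Ioi] at hk
      have hik : i ≠ k := ne_of_lt hk
      have hkR : ((i:ℕ):ℝ) < ((k:ℕ):ℝ) := by exact_mod_cast hk
      refine ⟨(mem_Pos_iff horth hRS hΦ hΔ _).mpr (Or.inr (Or.inl ⟨j, k, fun h => hkj h.symm, rfl⟩)), ?_⟩
      have hval : ⟪e j + e k, e i + e j⟫ = (1:ℝ) := by
        simp only [inner_add_left, inner_add_right, inner_ee horth]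
        simp [Ne.symm hnij, hik.symm, hkj]
      rw [sref_val horth hβ2 hval]
      apply not_mem_Pos horth hRS hΔ
      have hw : e j + e k - (e i + e j) = e k - e i := by module
      rw [hw, uv_sub horth]
      linarith
  -- cards
  have hejmem : j ∈ Finset.Ioi i := Finset.mem_Ioi.mpr hij
  have hc0 : S0.card = 3 := by
    rw [hS0]
    rw [Finset.card_insert_of_notMem, Finset.card_insert_of_notMem, Finset.card_singleton]
    · rw [Finset.mem_singleton]
      exact Ne.symm (by simpa using dec_add_ne_e horth i j j)
    · rw [Finset.mem_insert, Finset.mem_singleton]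
      push_neg
      exact ⟨fun h => hnij (e_inj horth h), Ne.symm (dec_add_ne_e horth i j i)⟩
  have hc2 : S2.card = n - 1 - (i:ℕ) - 1 := by
    rw [hS2, Finset.card_image_of_injOn, Finset.card_erase_of_mem hejmem, Fin.card_Ioi]
    intro a _ b _ hab
    exact e_inj horth (sub_right_inj.mp hab)
  have hc3 : S3.card = n - 1 - (j:ℕ) := by
    rw [hS3, Finset.card_image_of_injOn, Fin.card_Ioi]
    intro a _ b _ hab
    exact e_inj horth (add_left_cancel hab)
  have hc4 : S4.card = n - 1 - (j:ℕ) := by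
    rw [hS4, Finset.card_image_of_injOn, Fin.card_Ioi]
    intro a _ b _ hab
    exact e_inj horth (sub_right_inj.mp hab)
  have hc5 : S5.card = n - 1 - (i:ℕ) - 1 := by
    rw [hS5, Finset.card_image_of_injOn, Finset.card_erase_of_mem hejmem, Fin.card_Ioi]
    intro a _ b _ hab
    exact e_inj horth (add_left_cancel hab)
  have d45 : Disjoint S4 S5 := by
    rw [Finset.disjoint_left]
    rintro v hv4 hv5
    obtain ⟨k, hk, rfl⟩ := Finset.mem_image.mp hv4
    rw [Finset.mem_Ioi] at hk
    obtain ⟨k', _, hh⟩ := Finset.mem_image.mp hv5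
    exact dec_sub_ne_add horth (ne_of_lt hk) j k' hh.symm
  have d35 : Disjoint S3 (S4 ∪ S5) := by
    rw [Finset.disjoint_left]
    rintro v hv3 hv45
    obtain ⟨k, hk, rfl⟩ := Finset.mem_image.mp hv3
    rw [Finset.mem_Ioi] at hk
    rcases Finset.mem_union.mp hv45 with hv | hv
    · obtain ⟨k', hk', hh⟩ := Finset.mem_image.mp hv
      rw [Finset.mem_Ioi] at hk'
      exact dec_sub_ne_add horth (ne_of_lt hk') i k hh
    · obtain ⟨k', hk', hh⟩ := Finset.mem_image.mp hv
      obtain ⟨hk'j, hk'⟩ := Finset.mem_erase.mp hk'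
      rcases dec_add_add horth hh with ⟨h1, h2⟩ | ⟨h1, h2⟩
      · exact hnij.symm h1
      · exact (ne_of_lt hk) h1
  have d2r : Disjoint S2 (S3 ∪ (S4 ∪ S5)) := by
    rw [Finset.disjoint_left]
    rintro v hv2 hvr
    obtain ⟨k, hk, rfl⟩ := Finset.mem_image.mp hv2
    obtain ⟨hkj, hk⟩ := Finset.mem_erase.mp hk
    rw [Finset.mem_Ioi] at hk
    have hik : i ≠ k := ne_of_lt hk
    rcases Finset.mem_union.mp hvr with hv | hv
    · obtain ⟨k', _, hh⟩ := Finset.mem_image.mp hv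
      exact dec_sub_ne_add horth hik i k' hh.symm
    rcases Finset.mem_union.mp hv with hv | hv
    · obtain ⟨k', hk', hh⟩ := Finset.mem_image.mp hv
      rw [Finset.mem_Ioi] at hk'
      exact hnij ((dec_sub_sub horth (ne_of_lt hk') hik hh).1).symm
    · obtain ⟨k', _, hh⟩ := Finset.mem_image.mp hv
      exact dec_sub_ne_add horth hik j k' hh.symm
  have d0r : Disjoint S0 (S2 ∪ (S3 ∪ (S4 ∪ S5))) := by
    rw [Finset.disjoint_left]
    rintro v hv0 hvr
    rw [hS0, Finset.mem_insert, Finset.mem_insert, Finset.mem_singleton] at hv0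
    rcases Finset.mem_union.mp hvr with hv | hvr'
    · obtain ⟨k, hk, hh⟩ := Finset.mem_image.mp hv
      obtain ⟨hkj, hk⟩ := Finset.mem_erase.mp hk
      rw [Finset.mem_Ioi] at hk
      have hik : i ≠ k := ne_of_lt hk
      rcases hv0 with rfl | rfl | rfl
      · exact dec_sub_ne_e horth hik i hh
      · exact dec_sub_ne_e horth hik j hh
      · exact dec_sub_ne_add horth hik i j hh
    rcases Finset.mem_union.mp hvr' with hv | hvr''
    · obtain ⟨k, hk, hh⟩ := Finset.mem_image.mp hv
      rw [Finset.mem_Ioi] at hk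
      rcases hv0 with rfl | rfl | rfl
      · exact dec_add_ne_e horth i k i hh
      · exact dec_add_ne_e horth i k j hh
      · rcases dec_add_add horth hh with ⟨h1, h2⟩ | ⟨h1, h2⟩
        · exact (ne_of_lt hk).symm h2
        · exact hnij h1
    rcases Finset.mem_union.mp hvr'' with hv | hv
    · obtain ⟨k, hk, hh⟩ := Finset.mem_image.mp hv
      rw [Finset.mem_Ioi] at hk
      rcases hv0 with rfl | rfl | rfl
      · exact dec_sub_ne_e horth (ne_of_lt hk) i hh
      · exact dec_sub_ne_e horth (ne_of_lt hk) j hh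
      · exact dec_sub_ne_add horth (ne_of_lt hk) i j hh
    · obtain ⟨k, hk, hh⟩ := Finset.mem_image.mp hv
      obtain ⟨hkj, hk⟩ := Finset.mem_erase.mp hk
      rw [Finset.mem_Ioi] at hk
      rcases hv0 with rfl | rfl | rfl
      · exact dec_add_ne_e horth j k i hh
      · exact dec_add_ne_e horth j k j hh
      · rcases dec_add_add horth hh with ⟨h1, h2⟩ | ⟨h1, h2⟩
        · exact hnij h1.symm
        · exact (ne_of_lt hk) h2.symm
  have hU : (S0 ∪ (S2 ∪ (S3 ∪ (S4 ∪ S5)))).card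
      = 3 + ((n-1-(i:ℕ)-1) + ((n-1-(j:ℕ)) + ((n-1-(j:ℕ)) + (n-1-(i:ℕ)-1)))) := by
    rw [Finset.card_union_of_disjoint d0r, Finset.card_union_of_disjoint d2r,
      Finset.card_union_of_disjoint d35, Finset.card_union_of_disjoint d45,
      hc0, hc2, hc3, hc4, hc5]
  have hfin := Finset.card_le_card hsub
  rw [hU] at hfin
  omega

lemma len_short_simple (h0 : 0 < n) : len Δ (sref (e ⟨n-1, by omega⟩)) = 1 := by
  set t : Fin n := ⟨n-1, by omega⟩
  have hword : IsWord Δ (sref (e t)) 1 := isWord_sref (mem_Δn hΔ h0)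
  have h1 : len Δ (sref (e t)) ≤ 1 := len_le hword
  have h2 : len Δ (sref (e t)) ≠ 0 := by
    intro h
    have hmem : IsWord Δ (sref (e t)) 0 := by
      have := Nat.sInf_mem (⟨1, hword⟩ : {m | IsWord Δ (sref (e t)) m}.Nonempty)
      rwa [show sInf {m | IsWord Δ (sref (e t)) m} = len Δ (sref (e t)) from rfl, h] at this
    obtain ⟨l, hl, _, hw⟩ := hmem
    rw [List.length_eq_zero_iff] at hl
    subst hl
    simp only [List.map_nil, List.foldr_nil] at hw
    have : sref (e t) (e t) = e t := by rw [hw]; rfl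
    rw [sref_self horth (e_ne_zero horth t)] at this
    have h3 : e t = 0 := by
      have := congrArg (fun v => ⟪v, e t⟫) this
      simp only [inner_neg_left, nrm_e horth] at this
      norm_num at this
    exact e_ne_zero horth t h3
  omega

end InvPart

section LenPart
variable {Φ Δ : Finset V} (hRS : IsRS Φ Δ)
variable (hΦ : (Φ : Set V) =
    ({v | ∃ i j : Fin n, i ≠ j ∧ (v = e i - e j ∨ v = e i + e j ∨ v = -(e i + e j))} ∪
     {v | ∃ i : Fin n, v = e i ∨ v = -(e i)}))
variable (hΔ : (Δ : Set V) =
    ({v | ∃ i : Fin n, ∃ h : (i : ℕ) + 1 < n, v = e i - e ⟨(i : ℕ) + 1, h⟩} ∪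
     {v | ∃ h : 0 < n, v = e ⟨n - 1, by omega⟩}))
include hRS hΦ hΔ

lemma zero_not_mem_Δ : (0:V) ∉ Δ := fun h => hRS.zero_not_mem (hRS.simple_mem 0 h)

lemma len_sub_eq (i j : Fin n) (hij : i < j) :
    len Δ (sref (e i - e j)) = 2*((j:ℕ)-(i:ℕ))-1 := by
  have hij' : (i:ℕ) < (j:ℕ) := hij
  have hw := word_sub horth hΔ ((j:ℕ)-(i:ℕ)-1) i j hij (by omega)
  have hub := len_le hw
  have hlb := le_trans (inv_sub horth hRS hΦ hΔ i j hij)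
    (card_inv_le_len hRS (zero_not_mem_Δ horth hRS hΦ hΔ) hw)
  omega

lemma len_add_eq (i j : Fin n) (hij : i < j) :
    len Δ (sref (e i + e j)) = 4*n - 2*(i:ℕ) - 2*(j:ℕ) - 3 := by
  have hij' : (i:ℕ) < (j:ℕ) := hij
  have hjn : (j:ℕ) < n := j.isLt
  have hw := word_plus horth hΔ i j hij
  have hub := len_le hw
  have hlb := le_trans (inv_add horth hRS hΦ hΔ i j hij)
    (card_inv_le_len hRS (zero_not_mem_Δ horth hRS hΦ hΔ) hw)
  omega

lemma len_short_le (i : Fin n) :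
    len Δ (sref (e i)) ≤ 2*(n-1-(i:ℕ))+1 :=
  len_le (word_short horth hΔ (n-1-(i:ℕ)) i rfl)

end LenPart

end Bn

end QAux

open Pp in
/-- In type `B_n` (n ≥ 2) the quantum roots are exactly the long positive
roots (`⟪β,β⟫ = 2`) together with the short simple root `α_n = e_n`. -/
theorem stmt3 {V : Type*} [NormedAddCommGroup V] [InnerProductSpace ℝ V]
    (n : ℕ) (hn : 2 ≤ n) (e : Fin n → V) (Φ Δ : Finset V)
    (hRS : IsRS Φ Δ) (hB : TypeBData Φ Δ n e)
    (β : V) (hβ : β ∈ Pos Φ Δ) :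
    IsQuantum Φ Δ β ↔ (⟪β, β⟫ = (2:ℝ) ∨ β = e ⟨n - 1, by omega⟩) := by
  obtain ⟨horth, hΦ, hΔ⟩ := hB
  have key : ∀ a b : Fin n, a < b →
      (len Δ (sref (e a + e b)) : ℝ) = cpr ((2:ℝ) • rho Φ Δ) (e a + e b) - 1 := by
    intro a b hab
    have hab' : (a:ℕ) < (b:ℕ) := hab
    have hbn : (b:ℕ) < n := b.isLt
    have hnab : a ≠ b := ne_of_lt hab
    have hcpr : cpr ((2:ℝ) • rho Φ Δ) (e a + e b)
        = 4*(n:ℝ) - 2*((a:ℕ):ℝ) - 2*((b:ℕ):ℝ) - 2 := by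
      unfold Pp.cpr
      rw [QAux.two_rho_eq horth hRS hΦ hΔ, inner_add_right,
        QAux.inner_sumPos_e horth hRS hΦ hΔ, QAux.inner_sumPos_e horth hRS hΦ hΔ,
        QAux.nrm_add horth hnab]
      ring
    rw [hcpr, QAux.len_add_eq horth hRS hΦ hΔ a b hab]
    rw [Nat.cast_sub (by omega), Nat.cast_sub (by omega), Nat.cast_sub (by omega)]
    push_cast
    ring
  rcases (QAux.mem_Pos_iff horth hRS hΦ hΔ β).mp hβ with ⟨i, j, hij, rfl⟩ | ⟨i, j, hij, rfl⟩ | ⟨i, rfl⟩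
  · -- long root e i - e j
    have hij' : (i:ℕ) < (j:ℕ) := hij
    have hnij : i ≠ j := ne_of_lt hij
    apply iff_of_true
    · show (len Δ (sref (e i - e j)) : ℝ) = cpr ((2:ℝ) • rho Φ Δ) (e i - e j) - 1
      have hcpr : cpr ((2:ℝ) • rho Φ Δ) (e i - e j)
          = 2*((j:ℕ):ℝ) - 2*((i:ℕ):ℝ) := by
        unfold Pp.cpr
        rw [QAux.two_rho_eq horth hRS hΦ hΔ, inner_sub_right,
          QAux.inner_sumPos_e horth hRS hΦ hΔ, QAux.inner_sumPos_e horth hRS hΦ hΔ,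
          QAux.nrm_sub horth hnij]
        ring
      rw [hcpr, QAux.len_sub_eq horth hRS hΦ hΔ i j hij]
      rw [Nat.cast_sub (by omega)]
      push_cast [Nat.cast_sub (le_of_lt hij')]
      ring
    · exact Or.inl (QAux.nrm_sub horth hnij)
  · -- long root e i + e j
    apply iff_of_true
    · show (len Δ (sref (e i + e j)) : ℝ) = cpr ((2:ℝ) • rho Φ Δ) (e i + e j) - 1
      rcases hij.lt_or_gt with h | h
      · exact key i j h
      · rw [add_comm (e i) (e j)]
        exact key j i h
    · exact Or.inl (QAux.nrm_add horth hij)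
  · -- short root e i
    have hcpr : cpr ((2:ℝ) • rho Φ Δ) (e i)
        = 4*(n:ℝ) - 4*((i:ℕ):ℝ) - 2 := by
      unfold Pp.cpr
      rw [QAux.two_rho_eq horth hRS hΦ hΔ,
        QAux.inner_sumPos_e horth hRS hΦ hΔ, QAux.nrm_e horth]
      ring
    by_cases hc : (i:ℕ) = n - 1
    · have hieq : i = ⟨n - 1, by omega⟩ := Fin.ext (by simp [hc])
      apply iff_of_true
      · show (len Δ (sref (e i)) : ℝ) = cpr ((2:ℝ) • rho Φ Δ) (e i) - 1
        rw [hcpr, hieq, QAux.len_short_simple horth hRS hΦ hΔ (by omega)]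
        have hval : (((⟨n - 1, by omega⟩ : Fin n) : ℕ) : ℝ) = (n:ℝ) - 1 := by
          have h9 : ((⟨n - 1, by omega⟩ : Fin n) : ℕ) = n - 1 := rfl
          rw [h9, Nat.cast_sub (by omega : 1 ≤ n)]
          push_cast
          ring
        rw [hval]
        push_cast
        ring
      · exact Or.inr (by rw [hieq])
    · have hin : (i:ℕ) < n := i.isLt
      have hclt : (i:ℕ) < n - 1 := by omega
      apply iff_of_false
      · show ¬ ((len Δ (sref (e i)) : ℝ) = cpr ((2:ℝ) • rho Φ Δ) (e i) - 1)
        intro hq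
        rw [hcpr] at hq
        have hub := QAux.len_short_le horth hRS hΦ hΔ i
        have hubR : (len Δ (sref (e i)) : ℝ) ≤ ((2*(n-1-(i:ℕ))+1 : ℕ) : ℝ) := by
          exact_mod_cast hub
        have hcast : ((2*(n-1-(i:ℕ))+1 : ℕ) : ℝ) = 2*(n:ℝ) - 2*((i:ℕ):ℝ) - 1 := by
          rw [Nat.cast_add, Nat.cast_mul, Nat.cast_sub (by omega), Nat.cast_sub (by omega)]
          push_cast
          ring
        rw [hcast] at hubR
        rw [hq] at hubR
        have hiR : ((i:ℕ):ℝ) < (n:ℝ) - 1 := by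
          have : ((i:ℕ):ℝ) < ((n-1 : ℕ):ℝ) := by exact_mod_cast hclt
          rw [Nat.cast_sub (by omega)] at this
          push_cast at this
          linarith
        linarith
      · rintro (h2 | hne)
        · rw [QAux.nrm_e horth] at h2
          norm_num at h2
        · have := QAux.e_inj horth hne
          rw [this] at hc
          simp at hc
end
end
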